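/- arXiv:1706.01260 — 9 statements merged into one kernel-verified Lean document; each statement's English description precedes it below -/
import Mathlib

section
/- Glynn's formula for the permanent: for any n×n complex matrix M = (m_{ij}) with n ≥ 1, Per M = 2^{-(n-1)} · ∑_{δ} (∏_{k=1}^n δ_k) · ∏_{j=1}^n (∑_{i=1}^n δ_i m_{ij}), where the outer sum ranges over all δ ∈ {−1,1}^n with δ_1 = 1. -/
open Finset Function

namespace GlynnAux

/-- sign of a boolean -/
noncomputable def ε (b : Bool) : ℂ := if b then 1 else -1

/-- fiber cardinality -/
def c {n : ℕ} (f : Fin n → Fin n) (k : Fin n) : ℕ :=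
  (Finset.univ.filter fun j => f j = k).card

lemma sum_c {n : ℕ} (f : Fin n → Fin n) : ∑ k, c f k = n := by
  have := Finset.card_eq_sum_card_fiberwise (f := f) (s := Finset.univ)
    (t := Finset.univ) (fun x _ => mem_univ _)
  simpa [c, Finset.card_univ] using this.symm

lemma odd_iff_bijective {n : ℕ} (hn : 1 ≤ n) (f : Fin n → Fin n) :
    (∀ k : Fin n, k ≠ ⟨0, hn⟩ → Odd (c f k)) ↔ Function.Bijective f := by
  set z : Fin n := ⟨0, hn⟩
  constructor
  · intro h
    rw [Fintype.bijective_iff_surjective_and_card]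
    refine ⟨?_, rfl⟩
    intro k
    by_cases hk : k = z
    · subst hk
      by_contra hs
      push_neg at hs
      have hc0 : c f z = 0 := by
        rw [c, Finset.card_eq_zero, Finset.filter_eq_empty_iff]
        intro j _
        exact hs j
      have h1 : (∑ k' ∈ Finset.univ.erase z, c f k') = n := by
        have := Finset.add_sum_erase Finset.univ (c f) (mem_univ z)
        rw [sum_c] at this
        omega
      have h2 : ∀ k' ∈ Finset.univ.erase z, ((c f k' : ZMod 2)) = 1 := by
        intro k' hk'
        obtain ⟨m, hm⟩ := h k' (Finset.mem_erase.mp hk').1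
        rw [hm]
        push_cast
        rw [show (2 : ZMod 2) = 0 by decide]
        ring
      have hsum2 : ((∑ k' ∈ Finset.univ.erase z, c f k' : ℕ) : ZMod 2)
          = ((n - 1 : ℕ) : ZMod 2) := by
        rw [Nat.cast_sum, Finset.sum_congr rfl h2, Finset.sum_const,
          Finset.card_erase_of_mem (mem_univ z), Finset.card_univ, Fintype.card_fin]
        simp
      have hneq : ((n : ℕ) : ZMod 2) = ((n - 1 : ℕ) : ZMod 2) := by
        rw [← hsum2]
        exact congrArg Nat.cast h1.symm
      have h4 : ((n - 1 : ℕ) : ZMod 2) + 1 = ((n - 1 : ℕ) : ZMod 2) + 0 := by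
        rw [add_zero]
        nth_rewrite 2 [← hneq]
        rw [show n = (n - 1) + 1 by omega]
        push_cast
        ring
      exact absurd (add_left_cancel h4) (by decide)
    · obtain ⟨m, hm⟩ := h k hk
      have hpos : 0 < c f k := by omega
      obtain ⟨j, hj⟩ := Finset.card_pos.mp hpos
      exact ⟨j, (Finset.mem_filter.mp hj).2⟩
  · intro hf k _
    have : (Finset.univ.filter fun j => f j = k) = {(Equiv.ofBijective f hf).symm k} := by
      ext j
      simp only [Finset.mem_filter, mem_univ, true_and, Finset.mem_singleton]
      constructor
      · intro hj
        apply hf.injective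
        rw [hj]
        exact (Equiv.ofBijective_apply_symm_apply f hf k).symm
      · intro hj
        rw [hj]
        exact Equiv.ofBijective_apply_symm_apply f hf k
    rw [c, this, Finset.card_singleton]
    exact odd_one

lemma S_eval {n : ℕ} (hn : 1 ≤ n) (f : Fin n → Fin n) :
    ∑ d ∈ Finset.univ.filter (fun d : Fin n → Bool => d ⟨0, hn⟩ = true),
      (∏ k, ε (d k)) * ∏ j, ε (d (f j))
    = if Function.Bijective f then (2 : ℂ) ^ (n - 1) else 0 := by
  classical
  set z : Fin n := ⟨0, hn⟩ with hz
  -- Step 1: rewrite the summand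
  have hd : ∀ d : Fin n → Bool,
      (∏ k, ε (d k)) * ∏ j, ε (d (f j)) = ∏ k, ε (d k) ^ (c f k + 1) := by
    intro d
    have h1 : ∏ j, ε (d (f j)) = ∏ k, ε (d k) ^ (c f k) := by
      rw [← Finset.prod_fiberwise_of_maps_to (fun j (_ : j ∈ Finset.univ) => mem_univ (f j))
        (fun j => ε (d (f j)))]
      refine Finset.prod_congr rfl fun k _ => ?_
      rw [Finset.prod_congr rfl (fun j hj => by
        rw [(Finset.mem_filter.mp hj).2] : ∀ j ∈ Finset.univ.filter fun j => f j = k,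
          ε (d (f j)) = ε (d k)),
        Finset.prod_const]
      rfl
    rw [h1, ← Finset.prod_mul_distrib]
    exact Finset.prod_congr rfl fun k _ => by rw [pow_succ, mul_comm]
  -- Step 2: introduce g and switch to an unconstrained sum
  set g : Fin n → Bool → ℂ := fun k b =>
    if k = z ∧ b = false then 0 else ε b ^ (c f k + 1) with hg
  have h2 : ∑ d ∈ Finset.univ.filter (fun d : Fin n → Bool => d z = true),
      (∏ k, ε (d k)) * ∏ j, ε (d (f j))
      = ∑ d : Fin n → Bool, ∏ k, g k (d k) := by
    rw [← Finset.sum_filter_add_sum_filter_not Finset.univ (fun d : Fin n → Bool => d z = true)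
      (fun d => ∏ k, g k (d k))]
    have hB : ∑ d ∈ Finset.univ.filter (fun d : Fin n → Bool => ¬ d z = true),
        ∏ k, g k (d k) = 0 := by
      refine Finset.sum_eq_zero fun d hdm => ?_
      have hdz : d z = false := by
        have := (Finset.mem_filter.mp hdm).2
        simpa using this
      refine Finset.prod_eq_zero (mem_univ z) ?_
      rw [hg]
      simp [hdz]
    rw [hB, add_zero]
    refine Finset.sum_congr rfl fun d hdm => ?_
    have hdz : d z = true := (Finset.mem_filter.mp hdm).2
    rw [hd d]
    refine Finset.prod_congr rfl fun k _ => ?_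
    rw [hg]
    by_cases hk : k = z
    · subst hk; simp [hdz]
    · simp [hk]
  rw [h2]
  -- Step 3: factorize the sum over d
  have h3 : ∑ d : Fin n → Bool, ∏ k, g k (d k) = ∏ k, ∑ b : Bool, g k b := by
    rw [Finset.prod_univ_sum (fun _ => (Finset.univ : Finset Bool)) g,
      Fintype.piFinset_univ]
  rw [h3]
  -- Step 4: evaluate the factors
  have hzsum : ∑ b : Bool, g z b = 1 := by
    rw [Fintype.sum_bool, hg]
    simp [ε]
  have hksum : ∀ k : Fin n, k ≠ z →
      ∑ b : Bool, g k b = if Odd (c f k) then 2 else 0 := by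
    intro k hk
    rw [Fintype.sum_bool, hg]
    simp only [hk, false_and, if_false, and_true, ε]
    norm_num
    by_cases ho : Odd (c f k)
    · have hev : Even (c f k + 1) := by
        rw [Nat.even_add_one]
        exact (Nat.not_even_iff_odd).mpr ho
      rw [hev.neg_one_pow, if_pos ho]
      norm_num
    · have hod : Odd (c f k + 1) := by
        rw [Nat.odd_add_one]
        exact ho
      rw [hod.neg_one_pow, if_neg ho]
      ring
  rw [← Finset.mul_prod_erase Finset.univ _ (mem_univ z), hzsum, one_mul,
    Finset.prod_congr rfl (fun k hk => hksum k (Finset.mem_erase.mp hk).1)]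
  by_cases hb : Function.Bijective f
  · rw [if_pos hb]
    have hodd := (odd_iff_bijective hn f).mpr hb
    rw [Finset.prod_congr rfl (fun k hk => if_pos (hodd k (Finset.mem_erase.mp hk).1)),
      Finset.prod_const, Finset.card_erase_of_mem (mem_univ z), Finset.card_univ,
      Fintype.card_fin]
  · rw [if_neg hb]
    have : ¬ ∀ k : Fin n, k ≠ z → Odd (c f k) := fun h => hb ((odd_iff_bijective hn f).mp h)
    push_neg at this
    obtain ⟨k, hk, hko⟩ := this
    refine Finset.prod_eq_zero (Finset.mem_erase.mpr ⟨hk, mem_univ k⟩) ?_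
    rw [if_neg hko]

lemma sum_bij_perm {n : ℕ} (M : Matrix (Fin n) (Fin n) ℂ) :
    ∑ f ∈ Finset.univ.filter (fun f : Fin n → Fin n => Function.Bijective f),
      ∏ j, M (f j) j = ∑ σ : Equiv.Perm (Fin n), ∏ i, M i (σ i) := by
  classical
  have key : ∑ f ∈ Finset.univ.filter (fun f : Fin n → Fin n => Function.Bijective f),
      ∏ j, M (f j) j = ∑ σ : Equiv.Perm (Fin n), ∏ j, M (σ j) j := by
    refine Finset.sum_bij' (fun f hf => Equiv.ofBijective f ((Finset.mem_filter.mp hf).2))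
      (fun σ _ => ⇑σ) ?_ ?_ ?_ ?_ ?_
    · intro f hf; exact mem_univ _
    · intro σ _
      exact Finset.mem_filter.mpr ⟨mem_univ _, σ.bijective⟩
    · intro f hf; rfl
    · intro σ _
      ext x
      rfl
    · intro f hf
      exact Finset.prod_congr rfl fun j _ => rfl
  rw [key]
  refine Fintype.sum_bijective (fun σ => σ⁻¹)
    (Equiv.inv (Equiv.Perm (Fin n))).bijective _ _ fun σ => ?_
  have := Equiv.prod_comp σ (fun i => M i (σ⁻¹ i))
  simpa using this
end GlynnAux

/-- The permanent of a square complex matrix. -/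
noncomputable def perm {n : ℕ} (M : Matrix (Fin n) (Fin n) ℂ) : ℂ :=
  ∑ σ : Equiv.Perm (Fin n), ∏ i, M i (σ i)

/-- Glynn's formula for the permanent: the sum ranges over all sign vectors
`δ ∈ {-1,1}^n` with first coordinate `+1`, encoded by Boolean vectors `d` with
`d 0 = true` via `δ i = if d i then 1 else -1`. -/
theorem glynn_formula {n : ℕ} (hn : 1 ≤ n) (M : Matrix (Fin n) (Fin n) ℂ) :
    perm M = (2 ^ (n - 1) : ℂ)⁻¹ *
      ∑ d ∈ Finset.univ.filter (fun d : Fin n → Bool => d ⟨0, hn⟩ = true),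
        (∏ k : Fin n, (if d k then (1 : ℂ) else -1)) *
          ∏ j : Fin n, ∑ i : Fin n, (if d i then (1 : ℂ) else -1) * M i j := by
  classical
  have key : ∑ d ∈ Finset.univ.filter (fun d : Fin n → Bool => d ⟨0, hn⟩ = true),
      (∏ k : Fin n, (if d k then (1 : ℂ) else -1)) *
        ∏ j : Fin n, ∑ i : Fin n, (if d i then (1 : ℂ) else -1) * M i j
      = (2 : ℂ) ^ (n - 1) * perm M := by
    have step1 : ∀ d : Fin n → Bool,
        (∏ k : Fin n, (if d k then (1 : ℂ) else -1)) *
          ∏ j : Fin n, ∑ i : Fin n, (if d i then (1 : ℂ) else -1) * M i j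
        = ∑ f : Fin n → Fin n,
            ((∏ k, GlynnAux.ε (d k)) * ∏ j, GlynnAux.ε (d (f j))) * ∏ j, M (f j) j := by
      intro d
      have : ∏ j : Fin n, ∑ i : Fin n, GlynnAux.ε (d i) * M i j
          = ∑ f : Fin n → Fin n, ∏ j, GlynnAux.ε (d (f j)) * M (f j) j := by
        rw [Finset.prod_univ_sum (fun _ => (Finset.univ : Finset (Fin n)))
          (fun j i => GlynnAux.ε (d i) * M i j), Fintype.piFinset_univ]
      simp only [GlynnAux.ε] at this ⊢
      rw [this, Finset.mul_sum]
      refine Finset.sum_congr rfl fun f _ => ?_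
      rw [Finset.prod_mul_distrib]
      ring
    rw [Finset.sum_congr rfl fun d _ => step1 d, Finset.sum_comm]
    have step2 : ∀ f : Fin n → Fin n,
        ∑ d ∈ Finset.univ.filter (fun d : Fin n → Bool => d ⟨0, hn⟩ = true),
          ((∏ k, GlynnAux.ε (d k)) * ∏ j, GlynnAux.ε (d (f j))) * ∏ j, M (f j) j
        = (if Function.Bijective f then (2 : ℂ) ^ (n - 1) else 0) * ∏ j, M (f j) j := by
      intro f
      rw [← Finset.sum_mul, GlynnAux.S_eval hn f]
    rw [Finset.sum_congr rfl fun f _ => step2 f]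
    have step3 : ∑ f : Fin n → Fin n,
        (if Function.Bijective f then (2 : ℂ) ^ (n - 1) else 0) * ∏ j, M (f j) j
        = (2 : ℂ) ^ (n - 1) *
          ∑ f ∈ Finset.univ.filter (fun f : Fin n → Fin n => Function.Bijective f),
            ∏ j, M (f j) j := by
      rw [Finset.mul_sum, Finset.sum_filter]
      refine Finset.sum_congr rfl fun f _ => ?_
      by_cases hf : Function.Bijective f <;> simp [hf]
    rw [step3, GlynnAux.sum_bij_perm M, perm]
  rw [key]
  have h2 : ((2 : ℂ) ^ (n - 1)) ≠ 0 := pow_ne_zero _ two_ne_zero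
  rw [inv_mul_cancel_left₀ h2]
end

section
/- Let A be an m×n complex matrix whose columns are orthonormal (i.e., A*A = I_n, which requires m ≥ n). For r ∈ [m]^n let A_r denote the n×n matrix whose i-th row is row r_i of A. Then the function p(r) = (1/n!) · |Per A_r|^2 is a probability mass function on [m]^n, i.e., ∑_{r ∈ [m]^n} (1/n!)|Per A_r|^2 = 1. -/
open Matrix
theorem bosonSampling_key {m n : ℕ} (A : Matrix (Fin m) (Fin n) ℂ)
    (hA : Aᴴ * A = 1) :
    ∑ r : Fin n → Fin m,
      perm (Matrix.of fun i j => A (r i) j) *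
        (starRingEnd ℂ) (perm (Matrix.of fun i j => A (r i) j)) = (n.factorial : ℂ) := by
  have expand : ∀ r : Fin n → Fin m,
      perm (Matrix.of fun i j => A (r i) j) *
        (starRingEnd ℂ) (perm (Matrix.of fun i j => A (r i) j)) =
      ∑ σ : Equiv.Perm (Fin n), ∑ τ : Equiv.Perm (Fin n),
        ∏ i, (A (r i) (σ i) * (starRingEnd ℂ) (A (r i) (τ i))) := by
    intro r
    simp only [perm, map_sum, Finset.sum_mul_sum, map_prod, Matrix.of_apply,
      Finset.prod_mul_distrib]
  rw [Finset.sum_congr rfl fun r _ => expand r]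
  rw [Finset.sum_comm]
  have swap : ∀ σ : Equiv.Perm (Fin n),
      ∑ r : Fin n → Fin m, ∑ τ : Equiv.Perm (Fin n),
        ∏ i, (A (r i) (σ i) * (starRingEnd ℂ) (A (r i) (τ i)))
      = ∑ τ : Equiv.Perm (Fin n), ∑ r : Fin n → Fin m,
        ∏ i, (A (r i) (σ i) * (starRingEnd ℂ) (A (r i) (τ i))) := fun σ => Finset.sum_comm
  rw [Finset.sum_congr rfl fun σ _ => swap σ]
  have inner : ∀ (σ τ : Equiv.Perm (Fin n)),
      ∑ r : Fin n → Fin m, ∏ i, (A (r i) (σ i) * (starRingEnd ℂ) (A (r i) (τ i)))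
      = if σ = τ then 1 else 0 := by
    intro σ τ
    have h1 : ∑ r : Fin n → Fin m, ∏ i, (A (r i) (σ i) * (starRingEnd ℂ) (A (r i) (τ i)))
        = ∏ i, ∑ k : Fin m, (A k (σ i) * (starRingEnd ℂ) (A k (τ i))) := by
      rw [Finset.prod_univ_sum]
      rfl
    rw [h1]
    have h2 : ∀ i : Fin n, ∑ k : Fin m, (A k (σ i) * (starRingEnd ℂ) (A k (τ i)))
        = (Aᴴ * A) (τ i) (σ i) := by
      intro i
      simp [Matrix.mul_apply, Matrix.conjTranspose_apply, mul_comm]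
    rw [Finset.prod_congr rfl fun i _ => h2 i, hA]
    simp only [Matrix.one_apply]
    by_cases h : σ = τ
    · subst h; simp
    · obtain ⟨i, hi⟩ : ∃ i, τ i ≠ σ i := by
        by_contra hc
        push_neg at hc
        exact h (Equiv.ext fun i => (hc i).symm)
      rw [if_neg h]
      exact Finset.prod_eq_zero (Finset.mem_univ i) (if_neg hi)
  rw [Finset.sum_congr rfl fun σ _ => Finset.sum_congr rfl fun τ _ => inner σ τ]
  simp [Fintype.card_perm]

/-- For an `m × n` complex matrix with orthonormal columns, the function
`p(r) = (1/n!) |Per A_r|^2` is a probability mass function on `[m]^n`. -/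
theorem bosonSampling_pmf {m n : ℕ} (A : Matrix (Fin m) (Fin n) ℂ)
    (hA : Aᴴ * A = 1) :
    ∑ r : Fin n → Fin m,
      (1 / (n.factorial : ℝ)) * ‖perm (Matrix.of fun i j => A (r i) j)‖ ^ 2
      = 1 := by
  have key := bosonSampling_key A hA
  have habs : ∑ r : Fin n → Fin m,
      ‖perm (Matrix.of fun i j => A (r i) j)‖ ^ 2 = (n.factorial : ℝ) := by
    have : ((∑ r : Fin n → Fin m,
        ‖perm (Matrix.of fun i j => A (r i) j)‖ ^ 2 : ℝ) : ℂ)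
        = ((n.factorial : ℝ) : ℂ) := by
      push_cast
      rw [← key]
      refine Finset.sum_congr rfl fun r _ => ?_
      rw [Complex.mul_conj, ← Complex.sq_norm]
      push_cast
      ring
    exact_mod_cast this
  rw [← Finset.mul_sum, habs, one_div, inv_mul_cancel₀]
  exact_mod_cast Nat.factorial_ne_zero n
end

section
/- Let A be an m×n complex matrix with orthonormal columns (A*A = I_n), and for r ∈ [m]^n let A_r be the n×n matrix whose i-th row is row r_i of A. For 1 ≤ k ≤ n, the marginal of the pmf p(r) = (1/n!)|Per A_r|^2 on the first k coordinates is p(r_1,…,r_k) = ((n−k)!/n!) · ∑_{c ∈ C_k} |Per A^c_{r_1,…,r_k}|^2, where C_k is the set of k-element subsets of [n] and A^c_{r_1,…,r_k} is the k×k matrix formed from rows r_1,…,r_k and columns c of A. -/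
open Matrix Finset Equiv

section auxlemmas
variable {k l : ℕ}

/-- Extend a permutation of `Fin k` to `Fin (k+l)`, fixing the tail pointwise. -/
def extHead (π : Equiv.Perm (Fin k)) : Equiv.Perm (Fin (k + l)) :=
  Equiv.permCongr finSumFinEquiv (Equiv.sumCongr π (Equiv.refl (Fin l)))

@[simp] lemma extHead_castAdd (π : Equiv.Perm (Fin k)) (i : Fin k) :
    extHead (l := l) π (Fin.castAdd l i) = Fin.castAdd l (π i) := by
  simp [extHead, Equiv.permCongr_apply]

@[simp] lemma extHead_natAdd (π : Equiv.Perm (Fin k)) (j : Fin l) :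
    extHead (l := l) π (Fin.natAdd k j) = Fin.natAdd k j := by
  simp [extHead, Equiv.permCongr_apply]

lemma fin_cases_add (x : Fin (k + l)) :
    (∃ i, x = Fin.castAdd l i) ∨ ∃ j, x = Fin.natAdd k j :=
  Fin.addCases (fun i => Or.inl ⟨i, rfl⟩) (fun j => Or.inr ⟨j, rfl⟩) x

lemma sum_tailfix {M : Type*} [AddCommMonoid M] (G : Equiv.Perm (Fin (k + l)) → M) :
    ∑ u : Equiv.Perm (Fin (k + l)),
        (if ∀ j, u (Fin.natAdd k j) = Fin.natAdd k j then G u else 0)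
      = ∑ π : Equiv.Perm (Fin k), G (extHead π) := by
  classical
  rw [← Finset.sum_filter]
  refine (Finset.sum_bij (fun π _ => extHead (l := l) π) ?_ ?_ ?_ ?_).symm
  · intro π _
    simp [Finset.mem_filter]
  · intro π₁ _ π₂ _ h
    ext i
    have := congrArg (fun (e : Equiv.Perm (Fin (k+l))) => (e (Fin.castAdd l i)).val) h
    simpa using this
  · intro u hu
    rw [Finset.mem_filter] at hu
    have hu' : ∀ j, u (Fin.natAdd k j) = Fin.natAdd k j := hu.2
    have husymm : ∀ j, u.symm (Fin.natAdd k j) = Fin.natAdd k j := by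
      intro j; rw [Equiv.symm_apply_eq]; exact (hu' j).symm
    have hlt : ∀ (v : Equiv.Perm (Fin (k+l))), (∀ j, v (Fin.natAdd k j) = Fin.natAdd k j) →
        ∀ i : Fin k, (v (Fin.castAdd l i)).val < k := by
      intro v hv i
      by_contra hge
      push_neg at hge
      have hxval : (v (Fin.castAdd l i)).val < k + l := (v (Fin.castAdd l i)).isLt
      have hx : v (Fin.castAdd l i) = Fin.natAdd k ⟨(v (Fin.castAdd l i)).val - k, by omega⟩ := by
        apply Fin.ext; simp; omega
      have := hv ⟨(v (Fin.castAdd l i)).val - k, by omega⟩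
      rw [← hx] at this
      have := v.injective this
      have := congrArg Fin.val this
      simp at this
      omega
    refine ⟨{ toFun := fun i => ⟨(u (Fin.castAdd l i)).val, hlt u hu' i⟩
              invFun := fun i => ⟨(u.symm (Fin.castAdd l i)).val, hlt u.symm husymm i⟩
              left_inv := ?_, right_inv := ?_ }, Finset.mem_univ _, ?_⟩
    · intro i
      have h1 : Fin.castAdd l (⟨(u (Fin.castAdd l i)).val, hlt u hu' i⟩ : Fin k)
          = u (Fin.castAdd l i) := by apply Fin.ext; simp
      apply Fin.ext
      simp [h1]
    · intro i
      have h1 : Fin.castAdd l (⟨(u.symm (Fin.castAdd l i)).val, hlt u.symm husymm i⟩ : Fin k)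
          = u.symm (Fin.castAdd l i) := by apply Fin.ext; simp
      apply Fin.ext
      simp [h1]
    · ext x
      refine Fin.addCases (fun i => ?_) (fun j => ?_) x
      · rw [extHead_castAdd]
        simp
      · rw [extHead_natAdd, hu' j]
  · intro π _
    rfl
variable {k l : ℕ}

lemma compl_card_eq {c : Finset (Fin (k + l))} (hc : c.card = k) : cᶜ.card = l := by
  rw [Finset.card_compl, hc, Fintype.card_fin]; omega

/-- The permutation of `Fin (k+l)` built from a `k`-subset `c`, a permutation of the head
mapped into `c`, and a permutation of the tail mapped into `cᶜ`. -/
noncomputable def buildPerm (c : Finset (Fin (k + l))) (hc : c.card = k)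
    (ρ : Equiv.Perm (Fin k)) (w : Equiv.Perm (Fin l)) : Equiv.Perm (Fin (k + l)) := by
  refine Equiv.ofBijective
    (fun x => Fin.addCases (motive := fun _ => Fin (k+l))
      (fun i => c.orderEmbOfFin hc (ρ i)) (fun j => cᶜ.orderEmbOfFin (compl_card_eq hc) (w j)) x)
    ((Finite.injective_iff_bijective).mp ?_)
  intro x y hxy
  rcases Fin.addCases (motive := fun x => (∃ i, x = Fin.castAdd l i) ∨ ∃ j, x = Fin.natAdd k j)
      (fun i => Or.inl ⟨i, rfl⟩) (fun j => Or.inr ⟨j, rfl⟩) x with ⟨i, rfl⟩ | ⟨j, rfl⟩ <;>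
    rcases Fin.addCases (motive := fun x => (∃ i, x = Fin.castAdd l i) ∨ ∃ j, x = Fin.natAdd k j)
      (fun i => Or.inl ⟨i, rfl⟩) (fun j => Or.inr ⟨j, rfl⟩) y with ⟨i', rfl⟩ | ⟨j', rfl⟩ <;>
    simp only [Fin.addCases_left, Fin.addCases_right] at hxy
  · exact congrArg (Fin.castAdd l) (ρ.injective ((c.orderEmbOfFin hc).injective hxy))
  · exact absurd (hxy ▸ c.orderEmbOfFin_mem hc (ρ i))
      (Finset.mem_compl.mp (cᶜ.orderEmbOfFin_mem (compl_card_eq hc) (w j')))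
  · exact absurd (hxy.symm ▸ c.orderEmbOfFin_mem hc (ρ i'))
      (Finset.mem_compl.mp (cᶜ.orderEmbOfFin_mem (compl_card_eq hc) (w j)))
  · exact congrArg (Fin.natAdd k) (w.injective ((cᶜ.orderEmbOfFin (compl_card_eq hc)).injective hxy))

@[simp] lemma buildPerm_castAdd (c : Finset (Fin (k + l))) (hc : c.card = k)
    (ρ : Equiv.Perm (Fin k)) (w : Equiv.Perm (Fin l)) (i : Fin k) :
    buildPerm c hc ρ w (Fin.castAdd l i) = c.orderEmbOfFin hc (ρ i) := by
  simp [buildPerm, Equiv.ofBijective]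

@[simp] lemma buildPerm_natAdd (c : Finset (Fin (k + l))) (hc : c.card = k)
    (ρ : Equiv.Perm (Fin k)) (w : Equiv.Perm (Fin l)) (j : Fin l) :
    buildPerm c hc ρ w (Fin.natAdd k j) = cᶜ.orderEmbOfFin (compl_card_eq hc) (w j) := by
  simp [buildPerm, Equiv.ofBijective]

lemma sum_perm_head {M : Type*} [AddCommMonoid M] (Q : (Fin k → Fin (k + l)) → M) :
    ∑ σ : Equiv.Perm (Fin (k + l)), Q (fun i => σ (Fin.castAdd l i))
      = ∑ x : {c : Finset (Fin (k + l)) // c ∈ Finset.powersetCard k Finset.univ} ×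
            Equiv.Perm (Fin k) × Equiv.Perm (Fin l),
          Q (fun i => x.1.1.orderEmbOfFin ((Finset.mem_powersetCard.mp x.1.2).2) (x.2.1 i)) := by
  classical
  refine (Finset.sum_bij
    (fun x _ => buildPerm x.1.1 ((Finset.mem_powersetCard.mp x.1.2).2) x.2.1 x.2.2)
    (fun _ _ => Finset.mem_univ _) ?_ ?_ ?_).symm
  · -- injectivity
    rintro ⟨⟨c₁, hc₁⟩, ρ₁, w₁⟩ _ ⟨⟨c₂, hc₂⟩, ρ₂, w₂⟩ _ h
    have happ : ∀ z, buildPerm c₁ ((Finset.mem_powersetCard.mp hc₁).2) ρ₁ w₁ z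
        = buildPerm c₂ ((Finset.mem_powersetCard.mp hc₂).2) ρ₂ w₂ z := fun z =>
      congrArg (fun e : Equiv.Perm (Fin (k+l)) => e z) h
    have hcc : c₁ = c₂ := by
      ext y
      constructor
      · intro hy
        have : ∃ i, c₁.orderEmbOfFin ((Finset.mem_powersetCard.mp hc₁).2) i = y := by
          have := Finset.range_orderEmbOfFin c₁ ((Finset.mem_powersetCard.mp hc₁).2)
          rw [Set.ext_iff] at this
          exact (this y).mpr hy
        obtain ⟨i, hi⟩ := this
        have := happ (Fin.castAdd l (ρ₁.symm i))
        simp only [buildPerm_castAdd, Equiv.apply_symm_apply] at this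
        rw [hi] at this
        exact this ▸ c₂.orderEmbOfFin_mem _ _
      · intro hy
        have : ∃ i, c₂.orderEmbOfFin ((Finset.mem_powersetCard.mp hc₂).2) i = y := by
          have := Finset.range_orderEmbOfFin c₂ ((Finset.mem_powersetCard.mp hc₂).2)
          rw [Set.ext_iff] at this
          exact (this y).mpr hy
        obtain ⟨i, hi⟩ := this
        have := (happ (Fin.castAdd l (ρ₂.symm i))).symm
        simp only [buildPerm_castAdd, Equiv.apply_symm_apply] at this
        rw [hi] at this
        exact this ▸ c₁.orderEmbOfFin_mem _ _
    subst hcc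
    have hρ : ρ₁ = ρ₂ := by
      ext i
      have := happ (Fin.castAdd l i)
      simp only [buildPerm_castAdd] at this
      exact congrArg Fin.val ((c₁.orderEmbOfFin _).injective this)
    have hw : w₁ = w₂ := by
      ext j
      have := happ (Fin.natAdd k j)
      simp only [buildPerm_natAdd] at this
      exact congrArg Fin.val ((c₁ᶜ.orderEmbOfFin _).injective this)
    simp [hρ, hw]
  · -- surjectivity
    intro σ _
    set c : Finset (Fin (k + l)) := Finset.image (fun i => σ (Fin.castAdd l i)) Finset.univ with hc
    have hinj : Function.Injective (fun i : Fin k => σ (Fin.castAdd l i)) := by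
      intro a b hab
      have := σ.injective hab
      exact Fin.ext (by simpa using congrArg Fin.val this)
    have hcard : c.card = k := by
      rw [hc, Finset.card_image_of_injective _ hinj, Finset.card_univ, Fintype.card_fin]
    have hcmem : c ∈ Finset.powersetCard k (Finset.univ : Finset (Fin (k+l))) :=
      Finset.mem_powersetCard.mpr ⟨Finset.subset_univ _, hcard⟩
    have hmemc : ∀ i : Fin k, σ (Fin.castAdd l i) ∈ c := fun i =>
      Finset.mem_image.mpr ⟨i, Finset.mem_univ _, rfl⟩
    have hmemcc : ∀ j : Fin l, σ (Fin.natAdd k j) ∈ cᶜ := by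
      intro j
      rw [Finset.mem_compl]
      intro hmem
      obtain ⟨i, _, hi⟩ := Finset.mem_image.mp hmem
      have := σ.injective hi
      have := congrArg Fin.val this
      simp at this
      omega
    let e₁ := c.orderIsoOfFin hcard
    let e₂ := cᶜ.orderIsoOfFin (compl_card_eq hcard)
    have hρinj : Function.Injective (fun i : Fin k => e₁.symm ⟨σ (Fin.castAdd l i), hmemc i⟩) := by
      intro a b hab
      exact hinj (congrArg Subtype.val (e₁.symm.injective hab))
    have hwinj : Function.Injective (fun j : Fin l => e₂.symm ⟨σ (Fin.natAdd k j), hmemcc j⟩) := by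
      intro a b hab
      have h2 := congrArg Subtype.val (e₂.symm.injective hab)
      have := σ.injective h2
      exact Fin.ext (by simpa using congrArg Fin.val this)
    refine ⟨⟨⟨c, hcmem⟩,
      Equiv.ofBijective _ ((Finite.injective_iff_bijective).mp hρinj),
      Equiv.ofBijective _ ((Finite.injective_iff_bijective).mp hwinj)⟩, Finset.mem_univ _, ?_⟩
    ext z
    refine Fin.addCases (fun i => ?_) (fun j => ?_) z
    · show (buildPerm c hcard _ _ (Fin.castAdd l i)).val = _
      rw [buildPerm_castAdd]
      show ((c.orderEmbOfFin hcard) (e₁.symm ⟨σ (Fin.castAdd l i), hmemc i⟩)).val = _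
      rw [← Finset.coe_orderIsoOfFin_apply]
      show ((e₁ (e₁.symm _) : Fin (k+l))).val = _
      rw [e₁.apply_symm_apply]
    · show (buildPerm c hcard _ _ (Fin.natAdd k j)).val = _
      rw [buildPerm_natAdd]
      show ((cᶜ.orderEmbOfFin (compl_card_eq hcard)) (e₂.symm ⟨σ (Fin.natAdd k j), hmemcc j⟩)).val = _
      rw [← Finset.coe_orderIsoOfFin_apply]
      show ((e₂ (e₂.symm _) : Fin (k+l))).val = _
      rw [e₂.apply_symm_apply]
  · -- value compatibility
    rintro ⟨⟨c, hc⟩, ρ, w⟩ _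
    congr 1
    funext i
    simp

end auxlemmas

/-- Marginal of the Boson Sampling pmf on the first `k` coordinates (writing
`n = k + l`): summing `p(r) = (1/n!)|Per A_r|^2` over the last `l` coordinates
gives `((n-k)!/n!) ∑_{c ∈ C_k} |Per A^c_{r_1,…,r_k}|^2`, where `C_k` is the set
of `k`-element subsets of the `n` columns. -/
theorem bosonSampling_marginal {m k l : ℕ} (hk : 1 ≤ k)
    (A : Matrix (Fin m) (Fin (k + l)) ℂ) (hA : Aᴴ * A = 1)
    (r : Fin k → Fin m) :
    ∑ t : Fin l → Fin m,
      (1 / ((k + l).factorial : ℝ)) *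
        ‖perm (Matrix.of fun i j => A (Fin.append r t i) j)‖ ^ 2
    = ((l.factorial : ℝ) / ((k + l).factorial : ℝ)) *
      ∑ c ∈ (Finset.powersetCard k (Finset.univ : Finset (Fin (k + l)))).attach,
        ‖perm (Matrix.of fun i j =>
          A (r i) (c.1.orderEmbOfFin ((Finset.mem_powersetCard.mp c.2).2) j))‖ ^ 2 := by
  classical
  set conj := starRingEnd ℂ with hconj
  -- orthonormality of columns
  have horth : ∀ a b : Fin (k + l),
      (∑ x : Fin m, A x a * conj (A x b)) = if b = a then 1 else 0 := by
    intro a b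
    have h1 := congrFun (congrFun hA b) a
    rw [Matrix.mul_apply] at h1
    simp only [Matrix.conjTranspose_apply, Matrix.one_apply] at h1
    rw [← h1]
    refine Finset.sum_congr rfl fun x _ => ?_
    rw [hconj, starRingEnd_apply, mul_comm]
  set P : (Fin k → Fin (k + l)) → ℂ := fun f => ∏ i, A (r i) (f i) with hP
  -- the key complex identity
  have key : ∑ t : Fin l → Fin m,
        perm (Matrix.of fun i j => A (Fin.append r t i) j) *
          conj (perm (Matrix.of fun i j => A (Fin.append r t i) j))
      = (l.factorial : ℂ) *
        ∑ c ∈ (Finset.powersetCard k (Finset.univ : Finset (Fin (k + l)))).attach,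
          perm (Matrix.of fun i j =>
              A (r i) (c.1.orderEmbOfFin ((Finset.mem_powersetCard.mp c.2).2) j)) *
            conj (perm (Matrix.of fun i j =>
              A (r i) (c.1.orderEmbOfFin ((Finset.mem_powersetCard.mp c.2).2) j))) := by
    calc
      ∑ t : Fin l → Fin m,
          perm (Matrix.of fun i j => A (Fin.append r t i) j) *
            conj (perm (Matrix.of fun i j => A (Fin.append r t i) j))
        = ∑ t : Fin l → Fin m, ∑ σ : Equiv.Perm (Fin (k + l)), ∑ τ : Equiv.Perm (Fin (k + l)),
            ∏ i, (A (Fin.append r t i) (σ i) * conj (A (Fin.append r t i) (τ i))) := by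
          refine Finset.sum_congr rfl fun t _ => ?_
          simp only [perm, Matrix.of_apply, map_sum]
          rw [Finset.sum_mul_sum]
          refine Finset.sum_congr rfl fun σ _ => Finset.sum_congr rfl fun τ _ => ?_
          rw [map_prod, ← Finset.prod_mul_distrib]
      _ = ∑ σ : Equiv.Perm (Fin (k + l)), ∑ τ : Equiv.Perm (Fin (k + l)), ∑ t : Fin l → Fin m,
            ∏ i, (A (Fin.append r t i) (σ i) * conj (A (Fin.append r t i) (τ i))) := by
          rw [Finset.sum_comm]
          exact Finset.sum_congr rfl fun σ _ => Finset.sum_comm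
      _ = ∑ σ : Equiv.Perm (Fin (k + l)), ∑ τ : Equiv.Perm (Fin (k + l)),
            (if ∀ j, τ (Fin.natAdd k j) = σ (Fin.natAdd k j) then
              ∏ i, (A (r i) (σ (Fin.castAdd l i)) * conj (A (r i) (τ (Fin.castAdd l i)))) else 0) := by
          refine Finset.sum_congr rfl fun σ _ => Finset.sum_congr rfl fun τ _ => ?_
          have hsplit : ∀ t : Fin l → Fin m,
              ∏ i, (A (Fin.append r t i) (σ i) * conj (A (Fin.append r t i) (τ i)))
              = (∏ i : Fin k, (A (r i) (σ (Fin.castAdd l i)) * conj (A (r i) (τ (Fin.castAdd l i))))) *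
                ∏ j : Fin l, (A (t j) (σ (Fin.natAdd k j)) * conj (A (t j) (τ (Fin.natAdd k j)))) := by
            intro t
            rw [Fin.prod_univ_add]
            simp only [Fin.append_left, Fin.append_right]
          simp only [hsplit]
          rw [← Finset.mul_sum]
          have hinner : (∑ t : Fin l → Fin m, ∏ j : Fin l,
              A (t j) (σ (Fin.natAdd k j)) * conj (A (t j) (τ (Fin.natAdd k j))))
              = ∏ j : Fin l, ∑ x : Fin m,
                A x (σ (Fin.natAdd k j)) * conj (A x (τ (Fin.natAdd k j))) := by
            rw [← Fintype.piFinset_univ]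
            exact Finset.sum_prod_piFinset (Finset.univ : Finset (Fin m))
              (fun j x => A x (σ (Fin.natAdd k j)) * conj (A x (τ (Fin.natAdd k j))))
          rw [hinner]
          have : ∀ j : Fin l, (∑ x : Fin m, A x (σ (Fin.natAdd k j)) * conj (A x (τ (Fin.natAdd k j))))
              = if τ (Fin.natAdd k j) = σ (Fin.natAdd k j) then 1 else 0 := fun j => horth _ _
          simp only [this]
          rw [Fintype.prod_boole]
          rw [mul_ite, mul_one, mul_zero]
          exact ite_congr rfl (fun _ => rfl) (fun _ => rfl)
      _ = ∑ σ : Equiv.Perm (Fin (k + l)), ∑ π : Equiv.Perm (Fin k),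
            ∏ i, (A (r i) (σ (Fin.castAdd l i)) * conj (A (r i) (σ (Fin.castAdd l (π i))))) := by
          refine Finset.sum_congr rfl fun σ _ => ?_
          rw [← Equiv.sum_comp (Equiv.mulLeft σ)
            (fun τ => if ∀ j, τ (Fin.natAdd k j) = σ (Fin.natAdd k j) then
              ∏ i, (A (r i) (σ (Fin.castAdd l i)) * conj (A (r i) (τ (Fin.castAdd l i)))) else 0)]
          have hcond : ∀ u : Equiv.Perm (Fin (k + l)),
              (∀ j, (Equiv.mulLeft σ u) (Fin.natAdd k j) = σ (Fin.natAdd k j))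
              ↔ (∀ j, u (Fin.natAdd k j) = Fin.natAdd k j) := by
            intro u
            constructor
            · intro h j
              exact σ.injective (h j)
            · intro h j
              simp [Equiv.Perm.mul_apply, h j]
          have htf := sum_tailfix (k := k) (l := l)
            (fun u => ∏ i, (A (r i) (σ (Fin.castAdd l i)) *
              conj (A (r i) (σ (u (Fin.castAdd l i))))))
          refine Eq.trans (Finset.sum_congr rfl fun u _ => ?_) (htf.trans ?_)
          · exact if_congr (hcond u) rfl rfl
          · refine Finset.sum_congr rfl fun π _ => ?_
            simp only [extHead_castAdd]
      _ = ∑ σ : Equiv.Perm (Fin (k + l)),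
            (P (fun i => σ (Fin.castAdd l i)) *
              ∑ π : Equiv.Perm (Fin k), conj (P (fun i => σ (Fin.castAdd l (π i))))) := by
          refine Finset.sum_congr rfl fun σ _ => ?_
          rw [Finset.mul_sum]
          refine Finset.sum_congr rfl fun π _ => ?_
          rw [Finset.prod_mul_distrib, ← map_prod]
      _ = ∑ x : {c : Finset (Fin (k + l)) // c ∈ Finset.powersetCard k Finset.univ} ×
            Equiv.Perm (Fin k) × Equiv.Perm (Fin l),
            (P (fun i => x.1.1.orderEmbOfFin ((Finset.mem_powersetCard.mp x.1.2).2) (x.2.1 i)) *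
              ∑ π : Equiv.Perm (Fin k), conj (P (fun i =>
                x.1.1.orderEmbOfFin ((Finset.mem_powersetCard.mp x.1.2).2) (x.2.1 (π i))))) := by
          exact sum_perm_head (fun f => P f * ∑ π : Equiv.Perm (Fin k), conj (P (fun i => f (π i))))
      _ = (l.factorial : ℂ) *
          ∑ c ∈ (Finset.powersetCard k (Finset.univ : Finset (Fin (k + l)))).attach,
            perm (Matrix.of fun i j =>
                A (r i) (c.1.orderEmbOfFin ((Finset.mem_powersetCard.mp c.2).2) j)) *
              conj (perm (Matrix.of fun i j =>
                A (r i) (c.1.orderEmbOfFin ((Finset.mem_powersetCard.mp c.2).2) j))) := by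
          rw [Fintype.sum_prod_type]
          rw [← Finset.univ_eq_attach, Finset.mul_sum]
          refine Finset.sum_congr rfl fun c _ => ?_
          rw [Fintype.sum_prod_type]
          have hrein : ∀ ρ : Equiv.Perm (Fin k),
              (∑ π : Equiv.Perm (Fin k), conj (P (fun i =>
                c.1.orderEmbOfFin ((Finset.mem_powersetCard.mp c.2).2) (ρ (π i)))))
              = ∑ π : Equiv.Perm (Fin k), conj (P (fun i =>
                c.1.orderEmbOfFin ((Finset.mem_powersetCard.mp c.2).2) (π i))) := by
            intro ρ
            exact Equiv.sum_comp (Equiv.mulLeft ρ)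
              (fun π => conj (P (fun i =>
                c.1.orderEmbOfFin ((Finset.mem_powersetCard.mp c.2).2) (π i))))
          simp only [hrein]
          have hconst : ∀ ρ : Equiv.Perm (Fin k),
              (∑ _w : Equiv.Perm (Fin l),
                (P (fun i => c.1.orderEmbOfFin ((Finset.mem_powersetCard.mp c.2).2) (ρ i)) *
                  ∑ π : Equiv.Perm (Fin k), conj (P (fun i =>
                    c.1.orderEmbOfFin ((Finset.mem_powersetCard.mp c.2).2) (π i)))))
              = (l.factorial : ℂ) *
                (P (fun i => c.1.orderEmbOfFin ((Finset.mem_powersetCard.mp c.2).2) (ρ i)) *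
                  ∑ π : Equiv.Perm (Fin k), conj (P (fun i =>
                    c.1.orderEmbOfFin ((Finset.mem_powersetCard.mp c.2).2) (π i)))) := by
            intro ρ
            rw [Finset.sum_const, Finset.card_univ, Fintype.card_perm, Fintype.card_fin,
              nsmul_eq_mul]
          simp only [hconst]
          rw [← Finset.mul_sum]
          congr 1
          rw [← Finset.sum_mul]
          have h1 : perm (Matrix.of fun i j =>
              A (r i) (c.1.orderEmbOfFin ((Finset.mem_powersetCard.mp c.2).2) j))
              = ∑ ρ : Equiv.Perm (Fin k), P (fun i =>
                c.1.orderEmbOfFin ((Finset.mem_powersetCard.mp c.2).2) (ρ i)) := by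
            simp [perm, hP, Matrix.of_apply]
          have h2 : conj (perm (Matrix.of fun i j =>
              A (r i) (c.1.orderEmbOfFin ((Finset.mem_powersetCard.mp c.2).2) j)))
              = ∑ π : Equiv.Perm (Fin k), conj (P (fun i =>
                c.1.orderEmbOfFin ((Finset.mem_powersetCard.mp c.2).2) (π i))) := by
            rw [h1, map_sum]
          rw [h2, h1]
  -- deduce the real statement
  have hre : ∀ z : ℂ, ‖z‖ ^ 2 = (z * conj z).re := by
    intro z
    rw [hconj, Complex.mul_conj, Complex.sq_norm]
    simp
  have hsum1 : (∑ t : Fin l → Fin m,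
        (perm (Matrix.of fun i j => A (Fin.append r t i) j) *
          conj (perm (Matrix.of fun i j => A (Fin.append r t i) j))).re)
      = (l.factorial : ℝ) *
        ∑ c ∈ (Finset.powersetCard k (Finset.univ : Finset (Fin (k + l)))).attach,
          (perm (Matrix.of fun i j =>
              A (r i) (c.1.orderEmbOfFin ((Finset.mem_powersetCard.mp c.2).2) j)) *
            conj (perm (Matrix.of fun i j =>
              A (r i) (c.1.orderEmbOfFin ((Finset.mem_powersetCard.mp c.2).2) j)))).re := by
    rw [← Complex.re_sum, key]
    simp [Complex.mul_re, Complex.re_sum]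
  simp only [hre]
  rw [← Finset.mul_sum, hsum1]
  ring
end

section
/- Let A be an m×n complex matrix with orthonormal columns (A*A = I_n). For a single coordinate, the marginal of the pmf p(r) = (1/n!)|Per A_r|^2 satisfies p(r_1) = (1/n) · ∑_{k=1}^{n} |a_{r_1,k}|^2 for each r_1 ∈ [m], i.e., ∑_{r_2,…,r_n ∈ [m]} (1/n!)|Per A_{(r_1,…,r_n)}|^2 = (1/n)∑_{k=1}^n |a_{r_1,k}|^2. -/
open Matrix

lemma perm_succ_ext {n : ℕ} (σ τ : Equiv.Perm (Fin (n + 1)))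
    (h : ∀ i : Fin n, σ i.succ = τ i.succ) : σ = τ := by
  have h0 : σ 0 = τ 0 := by
    rcases Fin.eq_zero_or_eq_succ (τ.symm (σ 0)) with h' | ⟨j, hj⟩
    · have := congrArg τ h'
      simpa using this
    · exfalso
      have h1 : τ (τ.symm (σ 0)) = σ 0 := τ.apply_symm_apply _
      rw [hj, ← h j] at h1
      exact (Fin.succ_ne_zero j) (σ.injective h1)
  ext i
  rcases Fin.eq_zero_or_eq_succ i with rfl | ⟨j, rfl⟩
  · exact congrArg Fin.val h0
  · exact congrArg Fin.val (h j)

/-- First-coordinate marginal of the Boson Sampling pmf: for an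
`m × (n+1)` matrix `A` with orthonormal columns and fixed `r₁`,
`∑_{r₂,…} (1/(n+1)!)|Per A_r|² = (1/(n+1)) ∑_k |a_{r₁,k}|²`. -/
theorem bosonSampling_first_marginal {m n : ℕ}
    (A : Matrix (Fin m) (Fin (n + 1)) ℂ) (hA : Aᴴ * A = 1) (r₁ : Fin m) :
    ∑ t : Fin n → Fin m,
      (1 / ((n + 1).factorial : ℝ)) *
        ‖perm (Matrix.of fun i j => A ((Fin.cons r₁ t : Fin (n + 1) → Fin m) i) j)‖ ^ 2
    = (1 / ((n : ℝ) + 1)) * ∑ k : Fin (n + 1), ‖A r₁ k‖ ^ 2 := by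
  classical
  set conj := (starRingEnd ℂ)
  have ortho : ∀ a b : Fin (n + 1), ∑ r : Fin m, A r a * conj (A r b)
      = if a = b then 1 else 0 := by
    intro a b
    have h := congrFun (congrFun hA b) a
    simp only [Matrix.mul_apply, Matrix.conjTranspose_apply, Matrix.one_apply] at h
    rw [show (∑ r : Fin m, A r a * conj (A r b)) = ∑ x : Fin m, star (A x b) * A x a
      from Finset.sum_congr rfl fun r _ => mul_comm _ _, h]
    rcases eq_or_ne a b with rfl | hab
    · simp
    · simp [hab, Ne.symm hab]
  have key : (∑ t : Fin n → Fin m,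
      (Complex.normSq (perm (Matrix.of fun i j =>
        A ((Fin.cons r₁ t : Fin (n + 1) → Fin m) i) j)) : ℂ))
      = (n.factorial : ℂ) * ∑ k : Fin (n + 1), (Complex.normSq (A r₁ k) : ℂ) := by
    have expand : ∀ t : Fin n → Fin m,
        (Complex.normSq (perm (Matrix.of fun i j =>
          A ((Fin.cons r₁ t : Fin (n + 1) → Fin m) i) j)) : ℂ)
        = ∑ σ : Equiv.Perm (Fin (n + 1)), ∑ τ : Equiv.Perm (Fin (n + 1)),
            (A r₁ (σ 0) * conj (A r₁ (τ 0))) *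
              ∏ i : Fin n, (A (t i) (σ i.succ) * conj (A (t i) (τ i.succ))) := by
      intro t
      rw [← Complex.mul_conj]
      unfold perm
      rw [map_sum, Finset.sum_mul_sum]
      refine Finset.sum_congr rfl fun σ _ => Finset.sum_congr rfl fun τ _ => ?_
      rw [map_prod, ← Finset.prod_mul_distrib, Fin.prod_univ_succ]
      simp [conj]
    simp only [expand]
    rw [Finset.sum_comm]
    have swap2 : ∀ σ : Equiv.Perm (Fin (n + 1)),
        (∑ t : Fin n → Fin m, ∑ τ : Equiv.Perm (Fin (n + 1)),
          (A r₁ (σ 0) * conj (A r₁ (τ 0))) *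
            ∏ i : Fin n, (A (t i) (σ i.succ) * conj (A (t i) (τ i.succ))))
        = (Complex.normSq (A r₁ (σ 0)) : ℂ) := by
      intro σ
      rw [Finset.sum_comm]
      have inner : ∀ τ : Equiv.Perm (Fin (n + 1)),
          (∑ t : Fin n → Fin m,
            (A r₁ (σ 0) * conj (A r₁ (τ 0))) *
              ∏ i : Fin n, (A (t i) (σ i.succ) * conj (A (t i) (τ i.succ))))
          = (A r₁ (σ 0) * conj (A r₁ (τ 0))) *
              if ∀ i : Fin n, σ i.succ = τ i.succ then 1 else 0 := by
        intro τ
        rw [← Finset.mul_sum, ← Fintype.prod_sum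
          (fun (i : Fin n) (r : Fin m) => A r (σ i.succ) * conj (A r (τ i.succ)))]
        congr 1
        simp only [ortho]
        rw [Finset.prod_boole]
        simp
      simp only [inner]
      rw [Finset.sum_eq_single σ]
      · rw [if_pos (fun i => rfl), mul_one, Complex.mul_conj]
      · intro τ _ hτ
        rw [if_neg, mul_zero]
        intro h
        exact hτ (perm_succ_ext σ τ h).symm
      · simp
    simp only [swap2]
    rw [← Equiv.sum_comp (Equiv.Perm.decomposeFin.symm)
      (fun σ : Equiv.Perm (Fin (n + 1)) => (Complex.normSq (A r₁ (σ 0)) : ℂ))]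
    rw [Fintype.sum_prod_type]
    simp only [Equiv.Perm.decomposeFin_symm_apply_zero, Finset.sum_const,
      Finset.card_univ, Fintype.card_perm, Fintype.card_fin, nsmul_eq_mul]
    rw [Finset.mul_sum]
  have keyR : (∑ t : Fin n → Fin m,
      Complex.normSq (perm (Matrix.of fun i j =>
        A ((Fin.cons r₁ t : Fin (n + 1) → Fin m) i) j)))
      = (n.factorial : ℝ) * ∑ k : Fin (n + 1), Complex.normSq (A r₁ k) := by
    have := key
    push_cast at this ⊢
    exact_mod_cast this
  simp only [Complex.sq_norm, ← Finset.mul_sum]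
  rw [keyR]
  have hfac : ((n + 1).factorial : ℝ) = ((n : ℝ) + 1) * (n.factorial : ℝ) := by
    rw [Nat.factorial_succ]; push_cast; ring
  rw [hfac]
  have h1 : (n.factorial : ℝ) ≠ 0 := Nat.cast_ne_zero.mpr (Nat.factorial_ne_zero n)
  have h2 : ((n : ℝ) + 1) ≠ 0 := by positivity
  field_simp
end

section
/- Let A be an m×n complex matrix with orthonormal columns (A*A = I_n). Then for each pair (r_1, r_2) ∈ [m]^2, the marginal ∑_{r_3,…,r_n} (1/n!)|Per A_{(r_1,…,r_n)}|^2 equals ((n−2)!/n!) · ∑_{c} |Per A^c_{r_1,r_2}|^2, where the sum is over all 2-element subsets c of [n] and A^c_{r_1,r_2} is the 2×2 matrix with rows r_1, r_2 and columns c of A. -/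
open Matrix

section Aux

open Equiv Finset

lemma bs_ss_ne_zero {n : ℕ} (k : Fin n) : (k.succ.succ : Fin (n+2)) ≠ 0 := Fin.succ_ne_zero _

lemma bs_ss_ne_one {n : ℕ} (k : Fin n) : (k.succ.succ : Fin (n+2)) ≠ 1 := by
  rw [← Fin.succ_zero_eq_one]
  intro h
  exact Fin.succ_ne_zero k (Fin.succ_injective _ h)

lemma bs_fin_three_cases {n : ℕ} (x : Fin (n+2)) :
    x = 0 ∨ x = 1 ∨ ∃ k : Fin n, x = k.succ.succ := by
  rcases Fin.eq_zero_or_eq_succ x with rfl | ⟨y, rfl⟩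
  · exact Or.inl rfl
  rcases Fin.eq_zero_or_eq_succ y with rfl | ⟨k, rfl⟩
  · exact Or.inr (Or.inl Fin.succ_zero_eq_one)
  · exact Or.inr (Or.inr ⟨k, rfl⟩)

lemma bs_filter_fix {n : ℕ} :
    Finset.filter (fun ρ : Equiv.Perm (Fin (n+2)) => ∀ k : Fin n, ρ k.succ.succ = k.succ.succ)
      Finset.univ = {1, swap 0 1} := by
  have zno : (0 : Fin (n+2)) ≠ 1 := by simp
  ext ρ
  simp only [Finset.mem_filter, Finset.mem_univ, true_and, Finset.mem_insert,
    Finset.mem_singleton]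
  constructor
  · intro h
    have h0 : ρ 0 = 0 ∨ ρ 0 = 1 := by
      rcases bs_fin_three_cases (ρ 0) with h' | h' | ⟨k, hk⟩
      · exact Or.inl h'
      · exact Or.inr h'
      · exact absurd (ρ.injective (hk.trans (h k).symm)).symm (bs_ss_ne_zero k)
    have h1 : ρ 1 = 0 ∨ ρ 1 = 1 := by
      rcases bs_fin_three_cases (ρ 1) with h' | h' | ⟨k, hk⟩
      · exact Or.inl h'
      · exact Or.inr h'
      · exact absurd (ρ.injective (hk.trans (h k).symm)).symm (bs_ss_ne_one k)
    rcases h0 with h0 | h0 <;> rcases h1 with h1 | h1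
    · exact absurd (ρ.injective (h0.trans h1.symm)) zno
    · left
      apply Equiv.ext
      intro x
      rw [Perm.one_apply]
      rcases bs_fin_three_cases x with rfl | rfl | ⟨k, rfl⟩
      · exact h0
      · exact h1
      · exact h k
    · right
      apply Equiv.ext
      intro x
      rcases bs_fin_three_cases x with rfl | rfl | ⟨k, rfl⟩
      · rw [h0, swap_apply_left]
      · rw [h1, swap_apply_right]
      · rw [swap_apply_of_ne_of_ne (bs_ss_ne_zero k) (bs_ss_ne_one k)]; exact h k
    · exact absurd (ρ.injective (h0.trans h1.symm)) zno
  · rintro (rfl | rfl) k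
    · rfl
    · exact swap_apply_of_ne_of_ne (bs_ss_ne_zero k) (bs_ss_ne_one k)

lemma bs_sum_fin_erase {n : ℕ} (x : Fin (n+2)) (g : Fin (n+2) → ℂ) :
    ∑ q : Fin (n+1), g (swap 0 x q.succ) = ∑ y ∈ univ.erase x, g y := by
  refine Finset.sum_bij (fun q _ => swap 0 x q.succ) ?_ ?_ ?_ ?_
  · intro q _
    rw [Finset.mem_erase]
    refine ⟨?_, Finset.mem_univ _⟩
    intro h
    have := congrArg (swap 0 x) h
    rw [swap_apply_self, swap_apply_right] at this
    exact Fin.succ_ne_zero q this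
  · intro a _ b _ h
    exact Fin.succ_injective _ ((swap 0 x).injective h)
  · intro y hy
    have hyx : y ≠ x := (Finset.mem_erase.mp hy).1
    have hz : swap 0 x y ≠ 0 := by
      intro h
      apply hyx
      have := congrArg (swap 0 x) h
      rwa [swap_apply_self, swap_apply_left] at this
    refine ⟨(swap 0 x y).pred hz, Finset.mem_univ _, ?_⟩
    show swap 0 x (((swap 0 x) y).pred hz).succ = y
    rw [Fin.succ_pred, swap_apply_self]
  · intro q _; rfl

lemma bs_sum_perm_two {n : ℕ} (f : Fin (n+2) → Fin (n+2) → ℂ) :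
    ∑ σ : Equiv.Perm (Fin (n+2)), f (σ 0) (σ 1)
      = (n.factorial : ℂ) * ∑ x : Fin (n+2), ∑ y ∈ univ.erase x, f x y := by
  rw [← Equiv.sum_comp (Equiv.Perm.decomposeFin.symm) (fun σ => f (σ 0) (σ 1)),
    Fintype.sum_prod_type]
  simp only [Equiv.Perm.decomposeFin_symm_apply_zero, Equiv.Perm.decomposeFin_symm_apply_one]
  have inner : ∀ x : Fin (n+2),
      ∑ σ' : Equiv.Perm (Fin (n+1)), f x (swap 0 x ((σ' 0)).succ)
        = (n.factorial : ℂ) * ∑ y ∈ univ.erase x, f x y := by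
    intro x
    rw [← Equiv.sum_comp (Equiv.Perm.decomposeFin.symm)
        (fun σ' : Equiv.Perm (Fin (n+1)) => f x (swap 0 x (σ' 0).succ)),
      Fintype.sum_prod_type]
    simp only [Equiv.Perm.decomposeFin_symm_apply_zero]
    rw [← bs_sum_fin_erase x (fun y => f x y)]
    simp only [Finset.sum_const, Finset.card_univ, Fintype.card_perm, Fintype.card_fin,
      nsmul_eq_mul, Finset.mul_sum]
  rw [Finset.sum_congr rfl fun x _ => inner x, ← Finset.mul_sum]

lemma bs_pair_orderEmb {n : ℕ} {x y : Fin (n+2)} (hxy : x < y)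
    (h2 : ({x, y} : Finset (Fin (n+2))).card = 2) :
    ∀ i : Fin 2, ({x, y} : Finset (Fin (n+2))).orderEmbOfFin h2 i = ![x, y] i := by
  have : ![x, y] = ⇑(({x, y} : Finset (Fin (n+2))).orderEmbOfFin h2) := by
    apply Finset.orderEmbOfFin_unique h2
    · intro i
      fin_cases i <;> simp
    · intro a b hab
      fin_cases a <;> fin_cases b <;> simp_all
  intro i
  rw [← this]

lemma bs_sum_lt_pairs {n : ℕ} (G : Fin (n+2) → Fin (n+2) → ℂ) :
    ∑ x : Fin (n+2), ∑ y : Fin (n+2), (if x < y then G x y else 0)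
      = ∑ c ∈ (Finset.powersetCard 2 (Finset.univ : Finset (Fin (n+2)))).attach,
          G (c.1.orderEmbOfFin ((Finset.mem_powersetCard.mp c.2).2) 0)
            (c.1.orderEmbOfFin ((Finset.mem_powersetCard.mp c.2).2) 1) := by
  rw [← Finset.sum_product']
  rw [← Finset.sum_filter]
  have hne : ∀ p : Fin (n+2) × Fin (n+2), p ∈ Finset.filter (fun a => a.1 < a.2)
      (Finset.univ ×ˢ Finset.univ) → p.1 ≠ p.2 :=
    fun p hp => ne_of_lt (Finset.mem_filter.mp hp).2
  refine Finset.sum_bij'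
    (i := fun p hp =>
      (⟨{p.1, p.2}, Finset.mem_powersetCard.mpr
        ⟨Finset.subset_univ _, Finset.card_pair (hne p hp)⟩⟩ :
        {c // c ∈ Finset.powersetCard 2 (Finset.univ : Finset (Fin (n+2)))}))
    (j := fun c _ => (c.1.orderEmbOfFin ((Finset.mem_powersetCard.mp c.2).2) 0,
      c.1.orderEmbOfFin ((Finset.mem_powersetCard.mp c.2).2) 1))
    ?_ ?_ ?_ ?_ ?_
  · intro a ha
    exact Finset.mem_attach _ _
  · intro c _
    have hmono := (c.1.orderEmbOfFin ((Finset.mem_powersetCard.mp c.2).2)).strictMono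
    have h01 : (0 : Fin 2) < 1 := by decide
    exact Finset.mem_filter.mpr ⟨Finset.mem_product.mpr ⟨Finset.mem_univ _, Finset.mem_univ _⟩,
      hmono h01⟩
  · intro p hp
    have hlt : p.1 < p.2 := (Finset.mem_filter.mp hp).2
    have h2 : ({p.1, p.2} : Finset (Fin (n+2))).card = 2 := Finset.card_pair (hne p hp)
    have e0 := bs_pair_orderEmb hlt h2 0
    have e1 := bs_pair_orderEmb hlt h2 1
    simp only [Matrix.cons_val_zero, Matrix.cons_val_one, Matrix.head_cons] at e0 e1
    exact Prod.ext e0 e1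
  · intro c _
    apply Subtype.ext
    dsimp only
    have h2 := (Finset.mem_powersetCard.mp c.2).2
    set e := c.1.orderEmbOfFin h2 with he
    have hab : e 0 ≠ e 1 := by
      intro h
      exact absurd (e.injective h) (by decide)
    apply Finset.eq_of_subset_of_card_le
    · intro z hz
      rcases Finset.mem_insert.mp hz with rfl | hz
      · exact Finset.orderEmbOfFin_mem _ _ _
      · rw [Finset.mem_singleton.mp hz]
        exact Finset.orderEmbOfFin_mem _ _ _
    · rw [h2, Finset.card_pair hab]
  · intro p hp
    have hlt : p.1 < p.2 := (Finset.mem_filter.mp hp).2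
    have h2 : ({p.1, p.2} : Finset (Fin (n+2))).card = 2 := Finset.card_pair (hne p hp)
    have e0 := bs_pair_orderEmb hlt h2 0
    have e1 := bs_pair_orderEmb hlt h2 1
    simp only [Matrix.cons_val_zero, Matrix.cons_val_one, Matrix.head_cons] at e0 e1
    exact (congr (congrArg G e0) e1).symm

lemma bs_perm_fin_two (M : Matrix (Fin 2) (Fin 2) ℂ) :
    perm M = M 0 0 * M 1 1 + M 0 1 * M 1 0 := by
  rw [perm, ← Equiv.sum_comp Equiv.Perm.decomposeFin.symm
      (fun σ : Equiv.Perm (Fin 2) => ∏ i, M i (σ i)), Fintype.sum_prod_type]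
  simp [Fin.sum_univ_two, Fin.prod_univ_two]

lemma bs_sum_erase_to_lt {n : ℕ} (F : Fin (n+2) → Fin (n+2) → ℂ) :
    ∑ x : Fin (n+2), ∑ y ∈ univ.erase x, F x y
      = ∑ x : Fin (n+2), ∑ y : Fin (n+2), (if x < y then F x y + F y x else 0) := by
  have step1 : ∀ x : Fin (n+2), ∑ y ∈ univ.erase x, F x y
      = ∑ y : Fin (n+2), ((if x < y then F x y else 0) + if y < x then F x y else 0) := by
    intro x
    rw [← Finset.filter_ne' (univ : Finset (Fin (n+2))) x, Finset.sum_filter]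
    refine Finset.sum_congr rfl fun y _ => ?_
    rcases lt_trichotomy x y with h | h | h
    · rw [if_pos (ne_of_gt h), if_pos h, if_neg (asymm h), add_zero]
    · rw [if_neg (by rw [h]; exact fun hc => hc rfl), if_neg (h ▸ lt_irrefl x),
        if_neg (h ▸ lt_irrefl x), add_zero]
    · rw [if_pos (ne_of_lt h), if_neg (asymm h), if_pos h, zero_add]
  rw [Finset.sum_congr rfl fun x _ => step1 x]
  simp only [Finset.sum_add_distrib]
  have h2 : ∑ x : Fin (n+2), ∑ y : Fin (n+2), (if y < x then F x y else 0)
      = ∑ x : Fin (n+2), ∑ y : Fin (n+2), (if x < y then F y x else 0) :=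
    Finset.sum_comm
  rw [h2, ← Finset.sum_add_distrib]
  refine Finset.sum_congr rfl fun x _ => ?_
  rw [← Finset.sum_add_distrib]
  refine Finset.sum_congr rfl fun y _ => ?_
  by_cases h : x < y <;> simp [h]

end Aux

set_option maxHeartbeats 1600000 in
/-- Two-coordinate marginal of the Boson Sampling pmf: for an `m × (n+2)` matrix
`A` with orthonormal columns and fixed `r₁, r₂`, summing over the remaining
coordinates gives `(n!/(n+2)!) ∑_{c ∈ C₂} |Per A^c_{r₁,r₂}|²`, the sum being
over all 2-element subsets `c` of the columns. -/
theorem bosonSampling_second_marginal {m n : ℕ}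
    (A : Matrix (Fin m) (Fin (n + 2)) ℂ) (hA : Aᴴ * A = 1) (r₁ r₂ : Fin m) :
    ∑ t : Fin n → Fin m,
      (1 / ((n + 2).factorial : ℝ)) *
        ‖perm (Matrix.of fun i j =>
          A ((Fin.cons r₁ (Fin.cons r₂ t) : Fin (n + 2) → Fin m) i) j)‖ ^ 2
    = ((n.factorial : ℝ) / ((n + 2).factorial : ℝ)) *
      ∑ c ∈ (Finset.powersetCard 2 (Finset.univ : Finset (Fin (n + 2)))).attach,
        ‖perm (Matrix.of fun (i : Fin 2) (j : Fin 2) =>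
          A (![r₁, r₂] i) (c.1.orderEmbOfFin ((Finset.mem_powersetCard.mp c.2).2) j))‖ ^ 2 := by
  classical
  open Equiv Finset in
  set B : Fin (n+2) → Fin (n+2) → ℂ := fun x y => A r₁ x * A r₂ y with hB
  set P : (Fin n → Fin m) → ℂ := fun t => perm (Matrix.of fun i j =>
      A ((Fin.cons r₁ (Fin.cons r₂ t) : Fin (n + 2) → Fin m) i) j) with hPdef
  set Q : {c // c ∈ Finset.powersetCard 2 (Finset.univ : Finset (Fin (n + 2)))} → ℂ :=
    fun c => perm (Matrix.of fun (i : Fin 2) (j : Fin 2) =>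
      A (![r₁, r₂] i) (c.1.orderEmbOfFin ((Finset.mem_powersetCard.mp c.2).2) j)) with hQdef
  have horth : ∀ x y : Fin (n+2),
      ∑ r : Fin m, A r x * (starRingEnd ℂ) (A r y) = if y = x then 1 else 0 := by
    intro x y
    have := congrFun (congrFun hA y) x
    rw [Matrix.mul_apply, Matrix.one_apply] at this
    simp only [Matrix.conjTranspose_apply] at this
    rw [← this]
    exact Finset.sum_congr rfl fun r _ => mul_comm _ _
  have hP : ∀ t, P t = ∑ σ : Equiv.Perm (Fin (n+2)),
      B (σ 0) (σ 1) * ∏ k : Fin n, A (t k) (σ k.succ.succ) := by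
    intro t
    simp only [hPdef]
    rw [perm]
    refine Finset.sum_congr rfl fun σ _ => ?_
    rw [Fin.prod_univ_succ, Fin.prod_univ_succ]
    simp only [Matrix.of_apply, Fin.cons_zero, Fin.cons_succ, Fin.succ_zero_eq_one, hB]
    rw [show (Fin.cons r₁ (Fin.cons r₂ t) : Fin (n+2) → Fin m) 1 = r₂ from by
      rw [← Fin.succ_zero_eq_one, Fin.cons_succ, Fin.cons_zero]]
    ring
  have key : ∑ t : Fin n → Fin m, P t * (starRingEnd ℂ) (P t)
      = (n.factorial : ℂ) * ∑ c ∈ (Finset.powersetCard 2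
          (Finset.univ : Finset (Fin (n + 2)))).attach, Q c * (starRingEnd ℂ) (Q c) := by
    have e1 : ∀ t, P t * (starRingEnd ℂ) (P t)
        = ∑ σ : Equiv.Perm (Fin (n+2)), ∑ τ : Equiv.Perm (Fin (n+2)),
            (B (σ 0) (σ 1) * (starRingEnd ℂ) (B (τ 0) (τ 1))) *
              ∏ k : Fin n, (A (t k) (σ k.succ.succ) *
                (starRingEnd ℂ) (A (t k) (τ k.succ.succ))) := by
      intro t
      rw [hP t, map_sum, Finset.sum_mul_sum]
      refine Finset.sum_congr rfl fun σ _ => Finset.sum_congr rfl fun τ _ => ?_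
      rw [_root_.map_mul, map_prod, Finset.prod_mul_distrib]
      ring
    calc ∑ t : Fin n → Fin m, P t * (starRingEnd ℂ) (P t)
        = ∑ σ : Equiv.Perm (Fin (n+2)), ∑ τ : Equiv.Perm (Fin (n+2)),
            (B (σ 0) (σ 1) * (starRingEnd ℂ) (B (τ 0) (τ 1))) *
              ∑ t : Fin n → Fin m, ∏ k : Fin n, (A (t k) (σ k.succ.succ) *
                (starRingEnd ℂ) (A (t k) (τ k.succ.succ))) := by
          rw [Finset.sum_congr rfl fun t _ => e1 t, Finset.sum_comm]
          refine Finset.sum_congr rfl fun σ _ => ?_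
          rw [Finset.sum_comm]
          exact Finset.sum_congr rfl fun τ _ => (Finset.mul_sum _ _ _).symm
      _ = ∑ σ : Equiv.Perm (Fin (n+2)), ∑ τ : Equiv.Perm (Fin (n+2)),
            (B (σ 0) (σ 1) * (starRingEnd ℂ) (B (τ 0) (τ 1))) *
              if (∀ k : Fin n, τ k.succ.succ = σ k.succ.succ) then 1 else 0 := by
          refine Finset.sum_congr rfl fun σ _ => Finset.sum_congr rfl fun τ _ => ?_
          congr 1
          have hps := Finset.prod_univ_sum (fun _ : Fin n => (Finset.univ : Finset (Fin m)))
            (fun k x => A x (σ k.succ.succ) * (starRingEnd ℂ) (A x (τ k.succ.succ)))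
          rw [Fintype.piFinset_univ] at hps
          rw [← hps]
          rw [Finset.prod_congr rfl fun k _ => horth (σ k.succ.succ) (τ k.succ.succ)]
          rw [Finset.prod_boole]
          simp
      _ = ∑ σ : Equiv.Perm (Fin (n+2)),
            (B (σ 0) (σ 1) * (starRingEnd ℂ) (B (σ 0) (σ 1))
              + B (σ 0) (σ 1) * (starRingEnd ℂ) (B (σ 1) (σ 0))) := by
          refine Finset.sum_congr rfl fun σ _ => ?_
          rw [show (∑ τ : Equiv.Perm (Fin (n+2)),
              (B (σ 0) (σ 1) * (starRingEnd ℂ) (B (τ 0) (τ 1))) *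
                if (∀ k : Fin n, τ k.succ.succ = σ k.succ.succ) then 1 else 0)
            = ∑ ρ : Equiv.Perm (Fin (n+2)),
              (B (σ 0) (σ 1) * (starRingEnd ℂ) (B ((σ * ρ) 0) ((σ * ρ) 1))) *
                if (∀ k : Fin n, (σ * ρ) k.succ.succ = σ k.succ.succ) then 1 else 0 from
            (Fintype.sum_bijective (σ * ·) (Group.mulLeft_bijective σ) _ _
              fun ρ => rfl).symm]
          simp only [Equiv.Perm.mul_apply, EmbeddingLike.apply_eq_iff_eq, mul_ite, mul_one,
            mul_zero]
          rw [← Finset.sum_filter, bs_filter_fix]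
          rw [Finset.sum_pair (by
            intro h
            have : (0 : Fin (n+2)) = 1 := by
              have := congrArg (fun ρ : Equiv.Perm (Fin (n+2)) => ρ 0) h
              simpa using this
            simp at this)]
          simp
      _ = (n.factorial : ℂ) * ∑ x : Fin (n+2), ∑ y ∈ Finset.univ.erase x,
            (B x y * (starRingEnd ℂ) (B x y) + B x y * (starRingEnd ℂ) (B y x)) :=
          bs_sum_perm_two (fun x y => B x y * (starRingEnd ℂ) (B x y)
            + B x y * (starRingEnd ℂ) (B y x))
      _ = (n.factorial : ℂ) * ∑ x : Fin (n+2), ∑ y : Fin (n+2),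
            (if x < y then (B x y + B y x) * (starRingEnd ℂ) (B x y + B y x) else 0) := by
          rw [bs_sum_erase_to_lt]
          congr 1
          refine Finset.sum_congr rfl fun x _ => Finset.sum_congr rfl fun y _ => ?_
          by_cases h : x < y
          · rw [if_pos h, if_pos h, map_add]
            ring
          · rw [if_neg h, if_neg h]
      _ = (n.factorial : ℂ) * ∑ c ∈ (Finset.powersetCard 2
            (Finset.univ : Finset (Fin (n + 2)))).attach, Q c * (starRingEnd ℂ) (Q c) := by
          rw [bs_sum_lt_pairs (fun x y => (B x y + B y x) * (starRingEnd ℂ) (B x y + B y x))]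
          congr 1
          refine Finset.sum_congr rfl fun c _ => ?_
          have hQc : Q c = B (c.1.orderEmbOfFin ((Finset.mem_powersetCard.mp c.2).2) 0)
                (c.1.orderEmbOfFin ((Finset.mem_powersetCard.mp c.2).2) 1)
              + B (c.1.orderEmbOfFin ((Finset.mem_powersetCard.mp c.2).2) 1)
                (c.1.orderEmbOfFin ((Finset.mem_powersetCard.mp c.2).2) 0) := by
            simp only [hQdef]
            rw [bs_perm_fin_two]
            simp only [Matrix.of_apply, Matrix.cons_val_zero, Matrix.cons_val_one,
              Matrix.head_cons, hB]
          rw [hQc]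
      -- done
  have real_key : ∑ t : Fin n → Fin m, Complex.normSq (P t)
      = (n.factorial : ℝ) * ∑ c ∈ (Finset.powersetCard 2
          (Finset.univ : Finset (Fin (n + 2)))).attach, Complex.normSq (Q c) := by
    have h1 : ((∑ t : Fin n → Fin m, Complex.normSq (P t) : ℝ) : ℂ)
        = (((n.factorial : ℝ) * ∑ c ∈ (Finset.powersetCard 2
            (Finset.univ : Finset (Fin (n + 2)))).attach, Complex.normSq (Q c) : ℝ) : ℂ) := by
      push_cast
      simp only [← Complex.mul_conj]
      exact key
    exact_mod_cast h1
  have habs : ∀ z : ℂ, ‖z‖ ^ 2 = Complex.normSq z := Complex.sq_norm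
  calc ∑ t : Fin n → Fin m, (1 / ((n + 2).factorial : ℝ)) * ‖P t‖ ^ 2
      = (1 / ((n + 2).factorial : ℝ)) * ∑ t : Fin n → Fin m, Complex.normSq (P t) := by
        rw [← Finset.mul_sum]
        congr 1
        exact Finset.sum_congr rfl fun t _ => habs (P t)
    _ = (1 / ((n + 2).factorial : ℝ)) * ((n.factorial : ℝ) * ∑ c ∈ (Finset.powersetCard 2
          (Finset.univ : Finset (Fin (n + 2)))).attach, Complex.normSq (Q c)) := by
        rw [real_key]
    _ = ((n.factorial : ℝ) / ((n + 2).factorial : ℝ)) * ∑ c ∈ (Finset.powersetCard 2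
          (Finset.univ : Finset (Fin (n + 2)))).attach, ‖Q c‖ ^ 2 := by
        rw [Finset.sum_congr rfl fun c _ => habs (Q c)]
        ring
end

section
/- Cauchy–Binet formula for permanents in the orthonormal case: if A is an m×n complex matrix with A*A = I_n, then ∑_{z} (1/μ(z)) |Per A_z|^2 = 1, where the sum is over all non-decreasing arrays z ∈ [m]^n, μ(z) = ∏_j s_j! with s_j the multiplicity of j in z, and A_z is the n×n matrix whose k-th row is row z_k of A. -/
open Matrix

/-- `mu z = ∏_j s_j!` where `s_j` is the multiplicity of the value `j` in `z`. -/
def mu {m n : ℕ} (z : Fin n → Fin m) : ℕ :=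
  ∏ j : Fin m, (Finset.univ.filter (fun i => z i = j)).card.factorial

lemma mu_pos {m n : ℕ} (z : Fin n → Fin m) : 0 < mu z :=
  Finset.prod_pos fun _ _ => Nat.factorial_pos _

lemma perm_row_perm {n : ℕ} (B : Fin n → Fin n → ℂ) (π : Equiv.Perm (Fin n)) :
    perm (Matrix.of fun i j => B (π i) j) = perm (Matrix.of B) := by
  unfold perm
  rw [← Equiv.sum_comp (Equiv.mulRight π⁻¹ : Equiv.Perm (Fin n) ≃ Equiv.Perm (Fin n))
    (fun σ => ∏ i, (Matrix.of B) i (σ i))]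
  refine Finset.sum_congr rfl fun σ _ => ?_
  rw [← Equiv.prod_comp π (fun i => (Matrix.of B) i ((Equiv.mulRight π⁻¹ σ) i))]
  refine Finset.prod_congr rfl fun i _ => ?_
  simp [Equiv.mulRight, Equiv.Perm.mul_apply]

lemma key {m n : ℕ} (A : Matrix (Fin m) (Fin n) ℂ) (hA : Aᴴ * A = 1) :
    ∑ z : Fin n → Fin m,
      perm (Matrix.of fun i j => A (z i) j) *
        (starRingEnd ℂ) (perm (Matrix.of fun i j => A (z i) j))
    = (n.factorial : ℂ) := by
  have h1 : ∀ z : Fin n → Fin m,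
      perm (Matrix.of fun i j => A (z i) j) *
        (starRingEnd ℂ) (perm (Matrix.of fun i j => A (z i) j))
      = ∑ σ : Equiv.Perm (Fin n), ∑ τ : Equiv.Perm (Fin n),
          ∏ i, (A (z i) (σ i) * (starRingEnd ℂ) (A (z i) (τ i))) := by
    intro z
    unfold perm
    rw [map_sum, Finset.sum_mul_sum]
    refine Finset.sum_congr rfl fun σ _ => Finset.sum_congr rfl fun τ _ => ?_
    rw [map_prod, ← Finset.prod_mul_distrib]
    rfl
  simp only [h1]
  have h2 : ∀ σ τ : Equiv.Perm (Fin n),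
      ∑ z : Fin n → Fin m, ∏ i, (A (z i) (σ i) * (starRingEnd ℂ) (A (z i) (τ i)))
      = ∏ i : Fin n, ((Aᴴ * A) (τ i) (σ i)) := by
    intro σ τ
    have := Finset.sum_prod_piFinset (Finset.univ : Finset (Fin m))
      (fun (i : Fin n) (j : Fin m) => A j (σ i) * (starRingEnd ℂ) (A j (τ i)))
    rw [Fintype.piFinset_univ] at this
    rw [this]
    refine Finset.prod_congr rfl fun i _ => ?_
    simp [Matrix.mul_apply, Matrix.conjTranspose_apply, mul_comm]
  calc ∑ z : Fin n → Fin m, ∑ σ : Equiv.Perm (Fin n), ∑ τ : Equiv.Perm (Fin n),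
        ∏ i, (A (z i) (σ i) * (starRingEnd ℂ) (A (z i) (τ i)))
      = ∑ σ : Equiv.Perm (Fin n), ∑ τ : Equiv.Perm (Fin n),
        ∑ z : Fin n → Fin m, ∏ i, (A (z i) (σ i) * (starRingEnd ℂ) (A (z i) (τ i))) := by
        rw [Finset.sum_comm]
        exact Finset.sum_congr rfl fun σ _ => Finset.sum_comm
    _ = ∑ σ : Equiv.Perm (Fin n), ∑ τ : Equiv.Perm (Fin n),
        ∏ i : Fin n, ((1 : Matrix (Fin n) (Fin n) ℂ) (τ i) (σ i)) := by
        refine Finset.sum_congr rfl fun σ _ => Finset.sum_congr rfl fun τ _ => ?_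
        rw [h2, hA]
    _ = (n.factorial : ℂ) := ?_
  have h3 : ∀ τ σ : Equiv.Perm (Fin n),
      ∏ i : Fin n, ((1 : Matrix (Fin n) (Fin n) ℂ) (τ i) (σ i))
      = if τ = σ then 1 else 0 := by
    intro τ σ
    by_cases h : τ = σ
    · subst h; simp [Matrix.one_apply]
    · obtain ⟨i, hi⟩ : ∃ i, τ i ≠ σ i := by
        by_contra hc
        push_neg at hc
        exact h (Equiv.ext hc)
      rw [if_neg h]
      refine Finset.prod_eq_zero (Finset.mem_univ i) ?_
      simp [Matrix.one_apply, hi]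
  simp only [h3]
  rw [Finset.sum_comm]
  simp [Finset.sum_ite_eq, Fintype.card_perm]

lemma stab_card {m n : ℕ} (w : Fin n → Fin m) :
    (Finset.univ.filter (fun π : Equiv.Perm (Fin n) => w ∘ π = w)).card = mu w := by
  classical
  rw [← Fintype.card_subtype, DomMulAct.stabilizer_card]
  unfold mu
  exact Finset.prod_congr rfl fun j _ => by rw [Fintype.card_subtype]

lemma fiber_mul_mu {m n : ℕ} (w : Fin n → Fin m) (hw : Monotone w) :
    (Finset.univ.filter
      (fun z : Fin n → Fin m => z ∘ ⇑(Tuple.sort z) = w)).card * mu w = n.factorial := by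
  classical
  have hsw : Tuple.sort w = Equiv.refl (Fin n) := Tuple.sort_eq_refl_iff_monotone.2 hw
  have himg : (Finset.univ.image (fun π : Equiv.Perm (Fin n) => w ∘ ⇑π))
      = Finset.univ.filter (fun z : Fin n → Fin m => z ∘ ⇑(Tuple.sort z) = w) := by
    ext z
    simp only [Finset.mem_image, Finset.mem_univ, true_and, Finset.mem_filter]
    constructor
    · rintro ⟨π, rfl⟩
      rw [Tuple.comp_perm_comp_sort_eq_comp_sort, hsw]
      rfl
    · intro hz
      refine ⟨(Tuple.sort z)⁻¹, ?_⟩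
      rw [← hz]
      ext i
      simp
  have hcount : ∀ z ∈ Finset.univ.image (fun π : Equiv.Perm (Fin n) => w ∘ ⇑π),
      (Finset.univ.filter (fun π : Equiv.Perm (Fin n) => w ∘ ⇑π = z)).card = mu w := by
    intro z hz
    obtain ⟨ρ, _, rfl⟩ := Finset.mem_image.mp hz
    rw [← stab_card w]
    refine Finset.card_bij' (fun π _ => π * ρ⁻¹) (fun π _ => π * ρ) ?_ ?_ ?_ ?_
    · intro π hπ
      simp only [Finset.mem_filter, Finset.mem_univ, true_and] at hπ ⊢
      ext i
      have := congrFun hπ (ρ⁻¹ i)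
      exact congrArg Fin.val (by simpa using this)
    · intro π hπ
      simp only [Finset.mem_filter, Finset.mem_univ, true_and] at hπ ⊢
      ext i
      have := congrFun hπ (ρ i)
      exact congrArg Fin.val (by simpa using this)
    · intro π _; group
    · intro π _; group
  have hfac : (Finset.univ : Finset (Equiv.Perm (Fin n))).card = n.factorial := by
    simp [Fintype.card_perm]
  rw [← hfac, Finset.card_eq_sum_card_image (fun π : Equiv.Perm (Fin n) => w ∘ ⇑π)]
  rw [Finset.sum_congr rfl hcount, Finset.sum_const, himg, smul_eq_mul]

/-- Cauchy–Binet for permanents (orthonormal case): if `AᴴA = I` then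
`∑_z (1/μ(z)) |Per A_z|² = 1`, summing over non-decreasing `z ∈ [m]^n`. -/
theorem cauchy_binet_permanent {m n : ℕ} (A : Matrix (Fin m) (Fin n) ℂ)
    (hA : Aᴴ * A = 1) :
    ∑ z ∈ Finset.univ.filter
        (fun z : Fin n → Fin m => ∀ i j : Fin n, i ≤ j → z i ≤ z j),
      (1 / (mu z : ℝ)) * ‖perm (Matrix.of fun i j => A (z i) j)‖ ^ 2
    = 1 := by
  classical
  set F : (Fin n → Fin m) → ℝ :=
    fun z => ‖perm (Matrix.of fun i j => A (z i) j)‖ ^ 2 with hF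
  -- step 1: sum over all tuples
  have hall : ∑ z : Fin n → Fin m, F z = (n.factorial : ℝ) := by
    have hk := key A hA
    have h1 : ∀ z : Fin n → Fin m,
        perm (Matrix.of fun i j => A (z i) j) *
          (starRingEnd ℂ) (perm (Matrix.of fun i j => A (z i) j))
        = ((F z : ℝ) : ℂ) := by
      intro z
      rw [hF, Complex.mul_conj]
      push_cast [Complex.sq_norm]
      rfl
    rw [Finset.sum_congr rfl (fun z _ => h1 z)] at hk
    exact_mod_cast hk
  -- invariance of F under sorting
  have hInv : ∀ z : Fin n → Fin m, F (z ∘ ⇑(Tuple.sort z)) = F z := by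
    intro z
    have h := perm_row_perm (fun i j => A (z i) j) (Tuple.sort z)
    simp only [hF]
    rw [show (Matrix.of fun i j => A ((z ∘ ⇑(Tuple.sort z)) i) j)
        = (Matrix.of fun i j => (fun i j => A (z i) j) ((Tuple.sort z) i) j) from rfl, h]
  -- grouping
  set filt := Finset.univ.filter
    (fun z : Fin n → Fin m => ∀ i j : Fin n, i ≤ j → z i ≤ z j) with hfilt
  have hgroup : ∑ w ∈ filt,
      ((Finset.univ.filter
        (fun z : Fin n → Fin m => z ∘ ⇑(Tuple.sort z) = w)).card : ℝ) * F w
      = ∑ z : Fin n → Fin m, F z := by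
    have h0 := Finset.sum_fiberwise_of_maps_to
      (s := (Finset.univ : Finset (Fin n → Fin m))) (t := filt)
      (g := fun z : Fin n → Fin m => z ∘ ⇑(Tuple.sort z))
      (fun z _ => by
        simp only [hfilt, Finset.mem_filter, Finset.mem_univ, true_and]
        exact fun i j hij => Tuple.monotone_sort z hij) F
    rw [← h0]
    refine Finset.sum_congr rfl fun w _ => ?_
    have hconst : ∀ z ∈ Finset.univ.filter
        (fun z : Fin n → Fin m => z ∘ ⇑(Tuple.sort z) = w), F z = F w := by
      intro z hz
      obtain ⟨-, hz⟩ := Finset.mem_filter.mp hz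
      rw [← hz, hInv]
    rw [Finset.sum_congr rfl hconst, Finset.sum_const, nsmul_eq_mul]
  -- final assembly
  have hne : (n.factorial : ℝ) ≠ 0 := Nat.cast_ne_zero.mpr (Nat.factorial_ne_zero n)
  refine mul_left_cancel₀ hne ?_
  rw [mul_one, Finset.mul_sum]
  have hterm : ∀ w ∈ filt, (n.factorial : ℝ) *
      ((1 / (mu w : ℝ)) * ‖perm (Matrix.of fun i j => A (w i) j)‖ ^ 2)
      = ((Finset.univ.filter
          (fun z : Fin n → Fin m => z ∘ ⇑(Tuple.sort z) = w)).card : ℝ) * F w := by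
    intro w hw
    have hwmono : Monotone w := by
      obtain ⟨-, hw2⟩ := Finset.mem_filter.mp hw
      exact fun i j hij => hw2 i j hij
    have hfm := fiber_mul_mu w hwmono
    have hmu : (mu w : ℝ) ≠ 0 := Nat.cast_ne_zero.mpr (mu_pos w).ne'
    have hc : ((Finset.univ.filter
        (fun z : Fin n → Fin m => z ∘ ⇑(Tuple.sort z) = w)).card : ℝ) * (mu w : ℝ)
        = (n.factorial : ℝ) := by exact_mod_cast congrArg (Nat.cast : ℕ → ℝ) hfm
    have hFw : F w = ‖perm (Matrix.of fun i j => A (w i) j)‖ ^ 2 := rfl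
    rw [hFw, ← hc]
    field_simp
  rw [Finset.sum_congr rfl hterm, hgroup, hall]
end

section
/- Let A be an m×n complex matrix with orthonormal columns and let s_i be the multiplicity of value i in a sample z from the Boson Sampling distribution q(z) = (1/μ(z))|Per A_z|^2 on non-decreasing arrays z ∈ [m]^n. Then the expectation of s_i equals ∑_{k=1}^{n} |a_{i,k}|^2. -/
open Matrix

private lemma perm_fix {n : ℕ} (t : Fin n) {σ τ : Equiv.Perm (Fin n)}
    (h : ∀ s, s ≠ t → τ s = σ s) : τ = σ := by
  refine Equiv.ext fun s => ?_
  by_cases hs : s = t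
  · subst hs
    by_contra hne
    obtain ⟨u, hu⟩ := τ.surjective (σ s)
    have hut : u ≠ s := by
      intro h'; subst h'; exact hne hu
    have h1 : τ u = σ u := h u hut
    exact hut (σ.injective (h1.symm.trans hu))
  · exact h s hs

private lemma main_c {m n : ℕ} (A : Matrix (Fin m) (Fin n) ℂ)
    (hA : Aᴴ * A = 1) (i : Fin m) :
    ∑ r : Fin n → Fin m,
      ((Finset.univ.filter (fun t => r t = i)).card : ℂ) *
        (perm (Matrix.of fun s j => A (r s) j) *
          (starRingEnd ℂ) (perm (Matrix.of fun s j => A (r s) j)))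
    = (n.factorial : ℂ) * ∑ k : Fin n, A i k * (starRingEnd ℂ) (A i k) := by
  have orth : ∀ a b : Fin n,
      ∑ j : Fin m, A j a * (starRingEnd ℂ) (A j b) = if b = a then 1 else 0 := by
    intro a b
    have h := congrFun (congrFun hA b) a
    simp only [Matrix.mul_apply, Matrix.conjTranspose_apply, Matrix.one_apply] at h
    calc ∑ j : Fin m, A j a * (starRingEnd ℂ) (A j b)
        = ∑ j : Fin m, (starRingEnd ℂ) (A j b) * A j a :=
          Finset.sum_congr rfl fun j _ => mul_comm _ _
      _ = if b = a then 1 else 0 := h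
  have expand : ∀ r : Fin n → Fin m,
      perm (Matrix.of fun s j => A (r s) j) *
        (starRingEnd ℂ) (perm (Matrix.of fun s j => A (r s) j))
      = ∑ σ : Equiv.Perm (Fin n), ∑ τ : Equiv.Perm (Fin n),
          ∏ s, (A (r s) (σ s) * (starRingEnd ℂ) (A (r s) (τ s))) := by
    intro r
    rw [perm, map_sum, Finset.sum_mul_sum]
    refine Finset.sum_congr rfl fun σ _ => Finset.sum_congr rfl fun τ _ => ?_
    rw [map_prod, ← Finset.prod_mul_distrib]
    simp [Matrix.of_apply]
  have inner : ∀ (t : Fin n) (σ τ : Equiv.Perm (Fin n)),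
      ∑ r : Fin n → Fin m,
        (if r t = i then (1:ℂ) else 0) *
          ∏ s, (A (r s) (σ s) * (starRingEnd ℂ) (A (r s) (τ s)))
      = (A i (σ t) * (starRingEnd ℂ) (A i (τ t))) *
          ∏ s ∈ Finset.univ.erase t, (if τ s = σ s then (1:ℂ) else 0) := by
    intro t σ τ
    set h : Fin n → Fin m → ℂ := fun s j =>
      (if s = t then (if j = i then (1:ℂ) else 0) else 1) *
        (A j (σ s) * (starRingEnd ℂ) (A j (τ s))) with hh
    have hr : ∀ r : Fin n → Fin m,
        (if r t = i then (1:ℂ) else 0) *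
          ∏ s, (A (r s) (σ s) * (starRingEnd ℂ) (A (r s) (τ s)))
        = ∏ s, h s (r s) := by
      intro r
      have h1 : (if r t = i then (1:ℂ) else 0)
          = ∏ s : Fin n, (if s = t then (if r s = i then (1:ℂ) else 0) else 1) := by
        simp
      rw [h1, ← Finset.prod_mul_distrib]
    simp only [hr]
    have key : (∑ r : Fin n → Fin m, ∏ s, h s (r s)) = ∏ s, ∑ j, h s j := by
      rw [Finset.prod_univ_sum, Fintype.piFinset_univ]
    rw [key, ← Finset.mul_prod_erase Finset.univ _ (Finset.mem_univ t)]
    congr 1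
    · simp [hh]
    · refine Finset.prod_congr rfl fun s hs => ?_
      have hst : s ≠ t := Finset.ne_of_mem_erase hs
      simp only [hh, if_neg hst, one_mul]
      exact orth (σ s) (τ s)
  have tau_sum : ∀ (t : Fin n) (σ : Equiv.Perm (Fin n)),
      ∑ τ : Equiv.Perm (Fin n),
        (A i (σ t) * (starRingEnd ℂ) (A i (τ t))) *
          ∏ s ∈ Finset.univ.erase t, (if τ s = σ s then (1:ℂ) else 0)
      = A i (σ t) * (starRingEnd ℂ) (A i (σ t)) := by
    intro t σ
    rw [Finset.sum_eq_single σ]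
    · simp
    · intro τ _ hτ
      have hex : ∃ s, s ≠ t ∧ τ s ≠ σ s := by
        by_contra hc
        push_neg at hc
        exact hτ (perm_fix t hc)
      obtain ⟨s, hs, hne⟩ := hex
      apply mul_eq_zero_of_right
      exact Finset.prod_eq_zero (Finset.mem_erase.mpr ⟨hs, Finset.mem_univ s⟩) (if_neg hne)
    · intro habs
      exact absurd (Finset.mem_univ σ) habs
  calc
    ∑ r : Fin n → Fin m,
      ((Finset.univ.filter (fun t => r t = i)).card : ℂ) *
        (perm (Matrix.of fun s j => A (r s) j) *
          (starRingEnd ℂ) (perm (Matrix.of fun s j => A (r s) j)))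
      = ∑ r : Fin n → Fin m, ∑ t : Fin n, ∑ σ : Equiv.Perm (Fin n), ∑ τ : Equiv.Perm (Fin n),
          (if r t = i then (1:ℂ) else 0) *
            ∏ s, (A (r s) (σ s) * (starRingEnd ℂ) (A (r s) (τ s))) := by
        refine Finset.sum_congr rfl fun r _ => ?_
        rw [expand r, Finset.card_filter]
        push_cast
        rw [Finset.sum_mul]
        refine Finset.sum_congr rfl fun t _ => ?_
        rw [Finset.mul_sum]
        refine Finset.sum_congr rfl fun σ _ => Finset.mul_sum _ _ _
    _ = ∑ t : Fin n, ∑ σ : Equiv.Perm (Fin n), ∑ τ : Equiv.Perm (Fin n),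
          ∑ r : Fin n → Fin m,
          (if r t = i then (1:ℂ) else 0) *
            ∏ s, (A (r s) (σ s) * (starRingEnd ℂ) (A (r s) (τ s))) := by
        rw [Finset.sum_comm]
        refine Finset.sum_congr rfl fun t _ => ?_
        rw [Finset.sum_comm]
        refine Finset.sum_congr rfl fun σ _ => ?_
        rw [Finset.sum_comm]
    _ = ∑ t : Fin n, ∑ σ : Equiv.Perm (Fin n),
          A i (σ t) * (starRingEnd ℂ) (A i (σ t)) := by
        refine Finset.sum_congr rfl fun t _ => Finset.sum_congr rfl fun σ _ => ?_
        calc ∑ τ : Equiv.Perm (Fin n), ∑ r : Fin n → Fin m,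
              (if r t = i then (1:ℂ) else 0) *
                ∏ s, (A (r s) (σ s) * (starRingEnd ℂ) (A (r s) (τ s)))
            = ∑ τ : Equiv.Perm (Fin n),
              (A i (σ t) * (starRingEnd ℂ) (A i (τ t))) *
                ∏ s ∈ Finset.univ.erase t, (if τ s = σ s then (1:ℂ) else 0) :=
              Finset.sum_congr rfl fun τ _ => inner t σ τ
          _ = A i (σ t) * (starRingEnd ℂ) (A i (σ t)) := tau_sum t σ
    _ = ∑ σ : Equiv.Perm (Fin n), ∑ k : Fin n, A i k * (starRingEnd ℂ) (A i k) := by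
        rw [Finset.sum_comm]
        exact Finset.sum_congr rfl fun σ _ => Equiv.sum_comp σ (fun k => A i k * (starRingEnd ℂ) (A i k))
    _ = (n.factorial : ℂ) * ∑ k : Fin n, A i k * (starRingEnd ℂ) (A i k) := by
        rw [Finset.sum_const, Finset.card_univ, Fintype.card_perm, Fintype.card_fin,
          nsmul_eq_mul]

/-- Expected multiplicity of the value `i` in a Boson Sampling sample:
`E(s_i) = ∑_k |a_{i,k}|²`.  By the expanded-space representation,
`E(s_i) = ∑_{r ∈ [m]^n} #{t : r_t = i} · (1/n!)|Per A_r|²`. -/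
theorem expected_multiplicity {m n : ℕ} (A : Matrix (Fin m) (Fin n) ℂ)
    (hA : Aᴴ * A = 1) (i : Fin m) :
    ∑ r : Fin n → Fin m,
      ((Finset.univ.filter (fun t => r t = i)).card : ℝ) *
        ((1 / (n.factorial : ℝ)) *
          ‖perm (Matrix.of fun s j => A (r s) j)‖ ^ 2)
    = ∑ k : Fin n, ‖A i k‖ ^ 2 := by
  have h := main_c A hA i
  simp only [Complex.mul_conj] at h
  have h2 : ∑ r : Fin n → Fin m,
      ((Finset.univ.filter (fun t => r t = i)).card : ℝ) *
        Complex.normSq (perm (Matrix.of fun s j => A (r s) j))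
      = (n.factorial : ℝ) * ∑ k : Fin n, Complex.normSq (A i k) := by
    have h' : ((∑ r : Fin n → Fin m,
        ((Finset.univ.filter (fun t => r t = i)).card : ℝ) *
          Complex.normSq (perm (Matrix.of fun s j => A (r s) j)) : ℝ) : ℂ)
        = (((n.factorial : ℝ) * ∑ k : Fin n, Complex.normSq (A i k) : ℝ) : ℂ) := by
      push_cast
      exact h
    exact_mod_cast h'
  have hfac : (n.factorial : ℝ) ≠ 0 := Nat.cast_ne_zero.mpr n.factorial_ne_zero
  calc
    ∑ r : Fin n → Fin m,
      ((Finset.univ.filter (fun t => r t = i)).card : ℝ) *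
        ((1 / (n.factorial : ℝ)) *
          ‖perm (Matrix.of fun s j => A (r s) j)‖ ^ 2)
      = (1 / (n.factorial : ℝ)) * ∑ r : Fin n → Fin m,
          ((Finset.univ.filter (fun t => r t = i)).card : ℝ) *
            Complex.normSq (perm (Matrix.of fun s j => A (r s) j)) := by
        rw [Finset.mul_sum]
        refine Finset.sum_congr rfl fun r _ => ?_
        rw [Complex.sq_norm]
        ring
    _ = (1 / (n.factorial : ℝ)) * ((n.factorial : ℝ) * ∑ k : Fin n, Complex.normSq (A i k)) := by
        rw [h2]
    _ = ∑ k : Fin n, ‖A i k‖ ^ 2 := by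
        rw [← mul_assoc, one_div_mul_cancel hfac, one_mul]
        exact Finset.sum_congr rfl fun k _ => (Complex.sq_norm _).symm
end

section
/- Let A be an m×n complex matrix with orthonormal columns and let s_i be the multiplicity of value i in a sample from the Boson Sampling distribution q(z) = (1/μ(z))|Per A_z|^2. Then E[s_i(s_i − 1)] = 4 ∑_{1 ≤ k < ℓ ≤ n} |a_{i,k}|^2 |a_{i,ℓ}|^2. -/
open Matrix
open Finset ComplexConjugate

private lemma card_cast {m n : ℕ} (i : Fin m) (r : Fin n → Fin m) :
    ((Finset.univ.filter (fun t => r t = i)).card : ℂ)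
      * (((Finset.univ.filter (fun t => r t = i)).card : ℂ) - 1)
    = ∑ p ∈ (Finset.univ : Finset (Fin n)).offDiag,
        (if r p.1 = i ∧ r p.2 = i then (1 : ℂ) else 0) := by
  rw [Finset.sum_boole]
  have h1 : ((Finset.univ : Finset (Fin n)).offDiag.filter
      (fun p => r p.1 = i ∧ r p.2 = i)) = (Finset.univ.filter (fun t => r t = i)).offDiag := by
    ext p
    simp only [Finset.mem_filter, Finset.mem_offDiag, Finset.mem_univ, true_and]
    tauto
  rw [h1, Finset.offDiag_card]
  set c := (Finset.univ.filter (fun t => r t = i)).card with hc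
  rcases Nat.eq_zero_or_pos c with h | h
  · simp [h]
  · rw [Nat.cast_sub (Nat.le_mul_of_pos_left c h)]
    push_cast
    ring

private lemma perm_expand {m n : ℕ} (A : Matrix (Fin m) (Fin n) ℂ) (r : Fin n → Fin m) :
    perm (Matrix.of fun s j => A (r s) j) * conj (perm (Matrix.of fun s j => A (r s) j))
    = ∑ σ : Equiv.Perm (Fin n), ∑ τ : Equiv.Perm (Fin n),
        ∏ v, (A (r v) (σ v) * conj (A (r v) (τ v))) := by
  simp only [perm, Matrix.of_apply, map_sum]
  rw [Finset.sum_mul_sum]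
  refine Finset.sum_congr rfl fun σ _ => Finset.sum_congr rfl fun τ _ => ?_
  rw [map_prod, ← Finset.prod_mul_distrib]

private lemma perm_fix_aux {α : Type*} [DecidableEq α] (ρ : Equiv.Perm α) (t u : α)
    (h : ∀ v, v ≠ t → v ≠ u → ρ v = v) : ρ = 1 ∨ ρ = Equiv.swap t u := by
  by_cases hρt : ρ t = t
  · have hu : ρ u = u := by
      by_contra hvv
      have h1 : ρ u ≠ t := by
        intro he
        have h2 : u = t := ρ.injective (he.trans hρt.symm)
        exact hvv (by rw [h2, hρt])
      exact hvv (ρ.injective (h (ρ u) h1 hvv))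
    left
    ext v
    by_cases h1 : v = t
    · simp [h1, hρt]
    by_cases h2 : v = u
    · simp [h2, hu]
    simp [h v h1 h2]
  · have ht : ρ t = u := by
      by_contra hne
      exact hρt (ρ.injective (h (ρ t) hρt hne))
    have hu : ρ u = t := by
      by_cases h2 : ρ u = u
      · exfalso
        have hteq : t = u := ρ.injective (ht.trans h2.symm)
        subst hteq
        exact hρt h2
      · by_contra hne
        exact h2 (ρ.injective (h (ρ u) hne h2))
    right
    ext v
    by_cases h1 : v = t
    · simp [h1, ht]
    by_cases h2 : v = u
    · simp [h2, hu]
    simp [h v h1 h2, Equiv.swap_apply_of_ne_of_ne h1 h2]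

private lemma delta_sum {m n : ℕ} (A : Matrix (Fin m) (Fin n) ℂ) (hA : Aᴴ * A = 1)
    (k l : Fin n) : ∑ x : Fin m, A x k * conj (A x l) = if k = l then 1 else 0 := by
  have h : (Aᴴ * A) l k = (1 : Matrix (Fin n) (Fin n) ℂ) l k := by rw [hA]
  rw [Matrix.mul_apply, Matrix.one_apply] at h
  simp only [Matrix.conjTranspose_apply] at h
  calc ∑ x : Fin m, A x k * conj (A x l) = ∑ x : Fin m, star (A x l) * A x k := by
        refine Finset.sum_congr rfl fun x _ => ?_
        rw [starRingEnd_apply, mul_comm]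
    _ = if k = l then 1 else 0 := by rw [h]; simp [eq_comm]

private lemma key1 {m n : ℕ} (A : Matrix (Fin m) (Fin n) ℂ) (hA : Aᴴ * A = 1) (i : Fin m)
    (t u : Fin n) (htu : t ≠ u) (σ : Equiv.Perm (Fin n)) :
    ∑ τ : Equiv.Perm (Fin n), ∑ r : Fin n → Fin m,
      (if r t = i ∧ r u = i then (1 : ℂ) else 0)
        * ∏ v, (A (r v) (σ v) * conj (A (r v) (τ v)))
    = 2 * ((A i (σ t) * conj (A i (σ t))) * (A i (σ u) * conj (A i (σ u)))) := by
  have hr : ∀ τ : Equiv.Perm (Fin n),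
      ∑ r : Fin n → Fin m, (if r t = i ∧ r u = i then (1 : ℂ) else 0)
          * ∏ v, (A (r v) (σ v) * conj (A (r v) (τ v)))
      = ∏ v, (if v = t ∨ v = u then A i (σ v) * conj (A i (τ v))
          else if σ v = τ v then 1 else 0) := by
    intro τ
    have hre : ∀ r : Fin n → Fin m,
        (if r t = i ∧ r u = i then (1 : ℂ) else 0)
            * ∏ v, (A (r v) (σ v) * conj (A (r v) (τ v)))
        = ∏ v, (fun (v : Fin n) (x : Fin m) =>
            if v = t ∨ v = u then (if x = i then A x (σ v) * conj (A x (τ v)) else 0)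
            else A x (σ v) * conj (A x (τ v))) v (r v) := by
      intro r
      by_cases h : r t = i ∧ r u = i
      · rw [if_pos h, one_mul]
        refine Finset.prod_congr rfl fun v _ => ?_
        by_cases hv : v = t ∨ v = u
        · have hri : r v = i := by
            rcases hv with h1 | h1
            · rw [h1]; exact h.1
            · rw [h1]; exact h.2
          simp [hv, hri]
        · simp only [if_neg hv]
      · rw [if_neg h, zero_mul]
        rcases not_and_or.mp h with h1 | h1
        · exact (Finset.prod_eq_zero (Finset.mem_univ t) (by simp [h1])).symm
        · exact (Finset.prod_eq_zero (Finset.mem_univ u) (by simp [h1])).symm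
    rw [Finset.sum_congr rfl fun r _ => hre r,
      ← Fintype.prod_sum (κ := fun _ : Fin n => Fin m) (fun v x =>
        if v = t ∨ v = u then (if x = i then A x (σ v) * conj (A x (τ v)) else 0)
        else A x (σ v) * conj (A x (τ v)))]
    refine Finset.prod_congr rfl fun v _ => ?_
    by_cases hv : v = t ∨ v = u
    · simp only [if_pos hv]
      simp
    · simp only [if_neg hv]
      exact delta_sum A hA (σ v) (τ v)
  rw [Finset.sum_congr rfl fun τ _ => hr τ]
  rw [← Equiv.sum_comp (Equiv.mulLeft σ)]
  simp only [Equiv.coe_mulLeft, Equiv.Perm.mul_apply, EmbeddingLike.apply_eq_iff_eq]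
  have hone : (1 : Equiv.Perm (Fin n)) ≠ Equiv.swap t u := by
    intro h
    apply htu
    have := Equiv.ext_iff.mp h t
    simpa using this
  rw [Fintype.sum_eq_add (1 : Equiv.Perm (Fin n)) (Equiv.swap t u) hone ?_]
  · have h1 : ∏ v : Fin n, (if v = t ∨ v = u
        then A i (σ v) * conj (A i (σ ((1 : Equiv.Perm (Fin n)) v)))
        else if v = (1 : Equiv.Perm (Fin n)) v then 1 else 0)
        = (A i (σ t) * conj (A i (σ t))) * (A i (σ u) * conj (A i (σ u))) := by
      rw [Fintype.prod_eq_mul t u htu (fun x hx => by simp [hx.1, hx.2])]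
      simp
    have h2 : ∏ v : Fin n, (if v = t ∨ v = u
        then A i (σ v) * conj (A i (σ (Equiv.swap t u v)))
        else if v = Equiv.swap t u v then 1 else 0)
        = (A i (σ t) * conj (A i (σ u))) * (A i (σ u) * conj (A i (σ t))) := by
      rw [Fintype.prod_eq_mul t u htu (fun x hx => by
        simp [hx.1, hx.2, Equiv.swap_apply_of_ne_of_ne hx.1 hx.2])]
      simp
    rw [h1, h2]
    ring
  · intro ρ hρ
    have hall : ¬ ∀ v, v ≠ t → v ≠ u → ρ v = v := by
      intro hall
      rcases perm_fix_aux ρ t u hall with h | h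
      · exact hρ.1 h
      · exact hρ.2 h
    push_neg at hall
    obtain ⟨v, hv1, hv2, hv3⟩ := hall
    refine Finset.prod_eq_zero (Finset.mem_univ v) ?_
    have : ¬ (v = t ∨ v = u) := by simp [hv1, hv2]
    simp [this, Ne.symm hv3]

private lemma offDiag_sum_lemma {n : ℕ} (G : Fin n → ℂ) :
    ∑ p ∈ (Finset.univ : Finset (Fin n)).offDiag, 2 * (G p.1 * G p.2)
    = 4 * ∑ k : Fin n, ∑ l ∈ Finset.univ.filter (fun l => k < l), G k * G l := by
  rw [show (Finset.univ : Finset (Fin n)).offDiag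
      = (Finset.univ ×ˢ Finset.univ).filter (fun p => p.1 ≠ p.2) from by ext; simp]
  rw [Finset.sum_filter, Finset.sum_product]
  have key : ∀ k l : Fin n, (if k ≠ l then 2 * (G k * G l) else 0)
      = (if k < l then 2 * (G k * G l) else 0) + (if l < k then 2 * (G k * G l) else 0) := by
    intro k l
    rcases lt_trichotomy k l with h | h | h
    · simp [ne_of_lt h, h, asymm h]
    · simp [h]
    · simp [(ne_of_gt h : k ≠ l), h, asymm h]
  simp only [key, Finset.sum_add_distrib]
  have swap2 : ∑ k : Fin n, ∑ l : Fin n, (if l < k then 2 * (G k * G l) else 0)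
      = ∑ k : Fin n, ∑ l : Fin n, (if k < l then 2 * (G l * G k) else 0) := Finset.sum_comm
  rw [swap2]
  simp only [← Finset.sum_add_distrib]
  have merge : ∀ k l : Fin n, ((if k < l then 2 * (G k * G l) else 0)
      + (if k < l then 2 * (G l * G k) else 0)) = if k < l then 4 * (G k * G l) else 0 := by
    intro k l
    by_cases h : k < l
    · simp only [if_pos h]; ring
    · simp [h]
  simp only [merge]
  rw [Finset.mul_sum]
  refine Finset.sum_congr rfl fun k _ => ?_
  rw [Finset.sum_filter, Finset.mul_sum]
  refine Finset.sum_congr rfl fun l _ => ?_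
  by_cases h : k < l <;> simp [h]

/-- Second factorial moment of the multiplicity of the value `i` in a Boson Sampling
sample: `E[s_i(s_i − 1)] = 4 ∑_{k<ℓ} |a_{i,k}|² |a_{i,ℓ}|²`, using the expanded-space
representation of the expectation. -/
theorem expected_factorial_moment {m n : ℕ} (A : Matrix (Fin m) (Fin n) ℂ)
    (hA : Aᴴ * A = 1) (i : Fin m) :
    ∑ r : Fin n → Fin m,
      (((Finset.univ.filter (fun t => r t = i)).card : ℝ) *
        (((Finset.univ.filter (fun t => r t = i)).card : ℝ) - 1)) *
        ((1 / (n.factorial : ℝ)) *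
          ‖perm (Matrix.of fun s j => A (r s) j)‖ ^ 2)
    = 4 * ∑ k : Fin n, ∑ l ∈ Finset.univ.filter (fun l => k < l),
        ‖A i k‖ ^ 2 * ‖A i l‖ ^ 2 := by
  apply Complex.ofReal_injective
  push_cast
  have habs : ∀ z : ℂ, ((‖z‖ : ℂ)) ^ 2 = z * conj z := fun z => by
    rw [← Complex.ofReal_pow, Complex.sq_norm, Complex.mul_conj]
  simp only [habs]
  calc
    ∑ r : Fin n → Fin m,
      (((Finset.univ.filter (fun t => r t = i)).card : ℂ) *
        (((Finset.univ.filter (fun t => r t = i)).card : ℂ) - 1)) *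
        ((1 / (n.factorial : ℂ)) * (perm (Matrix.of fun s j => A (r s) j) *
          conj (perm (Matrix.of fun s j => A (r s) j))))
      = ∑ r : Fin n → Fin m, (1 / (n.factorial : ℂ)) *
          ∑ p ∈ (Finset.univ : Finset (Fin n)).offDiag,
            ∑ σ : Equiv.Perm (Fin n), ∑ τ : Equiv.Perm (Fin n),
              (if r p.1 = i ∧ r p.2 = i then (1 : ℂ) else 0)
                * ∏ v, (A (r v) (σ v) * conj (A (r v) (τ v))) := by
        refine Finset.sum_congr rfl fun r _ => ?_
        have hfact : ∑ p ∈ (Finset.univ : Finset (Fin n)).offDiag,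
            ∑ σ : Equiv.Perm (Fin n), ∑ τ : Equiv.Perm (Fin n),
              (if r p.1 = i ∧ r p.2 = i then (1 : ℂ) else 0)
                * ∏ v, (A (r v) (σ v) * conj (A (r v) (τ v)))
            = (∑ p ∈ (Finset.univ : Finset (Fin n)).offDiag,
                (if r p.1 = i ∧ r p.2 = i then (1 : ℂ) else 0))
              * (∑ σ : Equiv.Perm (Fin n), ∑ τ : Equiv.Perm (Fin n),
                  ∏ v, (A (r v) (σ v) * conj (A (r v) (τ v)))) := by
          rw [Finset.sum_mul]
          refine Finset.sum_congr rfl fun p _ => ?_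
          rw [Finset.mul_sum]
          refine Finset.sum_congr rfl fun σ _ => ?_
          rw [Finset.mul_sum]
        rw [hfact, ← card_cast i r, ← perm_expand A r]
        ring
    _ = (1 / (n.factorial : ℂ)) * ∑ p ∈ (Finset.univ : Finset (Fin n)).offDiag,
          ∑ σ : Equiv.Perm (Fin n), ∑ τ : Equiv.Perm (Fin n), ∑ r : Fin n → Fin m,
            (if r p.1 = i ∧ r p.2 = i then (1 : ℂ) else 0)
              * ∏ v, (A (r v) (σ v) * conj (A (r v) (τ v))) := by
        rw [← Finset.mul_sum]
        congr 1
        rw [Finset.sum_comm]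
        refine Finset.sum_congr rfl fun p _ => ?_
        rw [Finset.sum_comm]
        refine Finset.sum_congr rfl fun σ _ => ?_
        rw [Finset.sum_comm]
    _ = (1 / (n.factorial : ℂ)) * ∑ p ∈ (Finset.univ : Finset (Fin n)).offDiag,
          ∑ σ : Equiv.Perm (Fin n),
            2 * ((A i (σ p.1) * conj (A i (σ p.1))) * (A i (σ p.2) * conj (A i (σ p.2)))) := by
        congr 1
        refine Finset.sum_congr rfl fun p hp => ?_
        have hne : p.1 ≠ p.2 := (Finset.mem_offDiag.mp hp).2.2
        exact Finset.sum_congr rfl fun σ _ => key1 A hA i p.1 p.2 hne σ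
    _ = (1 / (n.factorial : ℂ)) * ∑ σ : Equiv.Perm (Fin n),
          ∑ p ∈ (Finset.univ : Finset (Fin n)).offDiag,
            2 * ((A i p.1 * conj (A i p.1)) * (A i p.2 * conj (A i p.2))) := by
        rw [Finset.sum_comm]
        congr 1
        refine Finset.sum_congr rfl fun σ _ => ?_
        refine Finset.sum_equiv (Equiv.prodCongr σ σ) (fun p => ?_) (fun p hp => ?_)
        · simp only [Finset.mem_offDiag, Finset.mem_univ, true_and, Equiv.prodCongr_apply,
            Prod.map]
          exact ⟨fun h => fun he => h (σ.injective he), fun h => fun he => h (congrArg σ he)⟩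
        · simp [Equiv.prodCongr_apply, Prod.map]
    _ = 4 * ∑ k : Fin n, ∑ l ∈ Finset.univ.filter (fun l => k < l),
          (A i k * conj (A i k)) * (A i l * conj (A i l)) := by
        rw [Finset.sum_const, Finset.card_univ, Fintype.card_perm, Fintype.card_fin,
          nsmul_eq_mul]
        rw [offDiag_sum_lemma (fun k => A i k * conj (A i k))]
        have hfac : ((n.factorial : ℂ)) ≠ 0 := by
          exact_mod_cast Nat.cast_ne_zero.mpr n.factorial_ne_zero
        field_simp
end

section
/- Collision probability bound: with s_i the multiplicity of value i in a sample from the Boson Sampling distribution q on multisets of size n from [m] defined by an m×n matrix A with orthonormal columns, the probability P_D that some value appears at least twice satisfies P_D ≤ 2 ∑_{i=1}^{m} ∑_{1 ≤ k < ℓ ≤ n} |a_{i,k}|^2 |a_{i,ℓ}|^2. -/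
open Matrix

namespace CollisionAux

open Finset Equiv Complex

variable {m n : ℕ}

/-- `Pw A w = Per(A_w)`. -/
noncomputable def Pw (A : Matrix (Fin m) (Fin n) ℂ) (w : Fin n → Fin m) : ℂ :=
  ∑ σ : Equiv.Perm (Fin n), ∏ r, A (w r) (σ r)

lemma Pw_eq_perm (A : Matrix (Fin m) (Fin n) ℂ) (w : Fin n → Fin m) :
    perm (Matrix.of fun i j => A (w i) j) = Pw A w := rfl

lemma Pw_comp (A : Matrix (Fin m) (Fin n) ℂ) (z : Fin n → Fin m) (σ : Equiv.Perm (Fin n)) :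
    Pw A (z ∘ σ) = Pw A z := by
  unfold Pw
  have h1 : ∀ ρ : Equiv.Perm (Fin n),
      (∏ r, A (z (σ r)) (ρ r)) = ∏ r, A (z r) ((ρ * σ⁻¹) r) := by
    intro ρ
    have := Equiv.prod_comp σ (fun r => A (z r) (ρ (σ⁻¹ r)))
    simpa using this
  calc ∑ ρ : Equiv.Perm (Fin n), ∏ r, A ((z ∘ σ) r) (ρ r)
      = ∑ ρ : Equiv.Perm (Fin n), ∏ r, A (z r) ((ρ * σ⁻¹) r) := by
        refine Finset.sum_congr rfl fun ρ _ => h1 ρ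
    _ = ∑ ρ : Equiv.Perm (Fin n), ∏ r, A (z r) (ρ r) :=
        Equiv.sum_comp (Equiv.mulRight σ⁻¹) (fun ρ => ∏ r, A (z r) (ρ r))

lemma fiber_card_comp (z : Fin n → Fin m) (σ : Equiv.Perm (Fin n)) (v : Fin m) :
    (Finset.univ.filter (fun t => (z ∘ σ) t = v)).card
      = (Finset.univ.filter (fun t => z t = v)).card := by
  apply Finset.card_bij (fun t _ => σ t)
  · intro a ha
    simp only [mem_filter, mem_univ, true_and] at ha ⊢
    exact ha
  · intro a ha b hb h
    exact σ.injective h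
  · intro b hb
    simp only [mem_filter, mem_univ, true_and] at hb ⊢
    exact ⟨σ⁻¹ b, by simpa using hb, by simp⟩

lemma mu_comp (z : Fin n → Fin m) (σ : Equiv.Perm (Fin n)) : mu (z ∘ σ) = mu z := by
  unfold mu
  exact Finset.prod_congr rfl fun j _ => by rw [fiber_card_comp]

/-- restriction of a stabilizing permutation to a fiber -/
def stabRes (z : Fin n → Fin m) (σ : Equiv.Perm (Fin n)) (hσ : z ∘ σ = z) (j : Fin m) :
    {i : Fin n // z i = j} ≃ {i : Fin n // z i = j} where
  toFun x := ⟨σ x.1, by rw [show z (σ x.1) = z x.1 from congrFun hσ x.1, x.2]⟩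
  invFun x := ⟨σ⁻¹ x.1, by
    have h := congrFun hσ (σ⁻¹ x.1)
    simp only [Function.comp_apply, Equiv.Perm.inv_def, Equiv.apply_symm_apply] at h
    rw [Equiv.Perm.inv_def, ← h, x.2]⟩
  left_inv x := by ext; simp
  right_inv x := by ext; simp

lemma stab_card_le (z : Fin n → Fin m) :
    (Finset.univ.filter (fun σ : Equiv.Perm (Fin n) => z ∘ σ = z)).card ≤ mu z := by
  classical
  rw [← Fintype.card_subtype]
  have key : Fintype.card (∀ j : Fin m, {i : Fin n // z i = j} ≃ {i : Fin n // z i = j})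
      = mu z := by
    rw [Fintype.card_pi]
    unfold mu
    refine Finset.prod_congr rfl fun j _ => ?_
    rw [Fintype.card_equiv (Equiv.refl _), Fintype.card_subtype]
  rw [← key]
  apply Fintype.card_le_of_injective (fun σp => stabRes z σp.1 σp.2)
  intro a b hab
  apply Subtype.ext
  apply Equiv.ext
  intro i
  have h1 := congrFun hab (z i)
  have h2 := congrArg (fun e => (e ⟨i, rfl⟩ : {t : Fin n // z t = z i}).1) h1
  simpa [stabRes] using h2

lemma orbit_fiber_card_le (z w : Fin n → Fin m) :
    (Finset.univ.filter (fun σ : Equiv.Perm (Fin n) => z ∘ σ = w)).card ≤ mu z := by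
  classical
  rcases (Finset.univ.filter (fun σ : Equiv.Perm (Fin n) => z ∘ σ = w)).eq_empty_or_nonempty with
    he | ⟨σ₀, hσ₀⟩
  · rw [he]; exact Nat.zero_le _
  · simp only [mem_filter, mem_univ, true_and] at hσ₀
    calc (Finset.univ.filter (fun σ : Equiv.Perm (Fin n) => z ∘ σ = w)).card
        ≤ (Finset.univ.filter (fun σ : Equiv.Perm (Fin n) => z ∘ σ = z)).card := by
          apply Finset.card_le_card_of_injOn (fun σ => σ * σ₀⁻¹)
          · intro σ hσ
            simp only [mem_filter, mem_univ, true_and, Finset.coe_filter, Set.mem_setOf_eq] at hσ ⊢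
            funext i
            have h1 := congrFun hσ (σ₀⁻¹ i)
            have h2 := congrFun hσ₀ (σ₀⁻¹ i)
            simp only [Function.comp_apply] at h1 h2
            simp only [Function.comp_apply, Equiv.Perm.coe_mul]
            rw [h1, ← h2]
            simp
          · intro a _ b _ h
            exact mul_right_cancel h
      _ ≤ mu z := stab_card_le z

/-- orbit of `z` under right composition with permutations -/
noncomputable def orbit (z : Fin n → Fin m) : Finset (Fin n → Fin m) :=
  Finset.univ.image (fun σ : Equiv.Perm (Fin n) => z ∘ σ)

lemma factorial_le_orbit_card_mul_mu (z : Fin n → Fin m) :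
    n.factorial ≤ (orbit z).card * mu z := by
  classical
  have h0 : (Finset.univ : Finset (Equiv.Perm (Fin n))).card = n.factorial := by
    rw [Finset.card_univ, Fintype.card_perm, Fintype.card_fin]
  have h1 := Finset.card_eq_sum_card_fiberwise
    (f := fun σ : Equiv.Perm (Fin n) => z ∘ σ) (s := Finset.univ) (t := orbit z)
    (fun σ _ => Finset.mem_image_of_mem _ (Finset.mem_univ σ))
  rw [h0] at h1
  rw [h1]
  calc ∑ w ∈ orbit z, (Finset.univ.filter (fun σ : Equiv.Perm (Fin n) => z ∘ σ = w)).card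
      ≤ ∑ _w ∈ orbit z, mu z := Finset.sum_le_sum fun w _ => orbit_fiber_card_le z w
    _ = (orbit z).card * mu z := by rw [Finset.sum_const, smul_eq_mul]

/-- count of elements with value at most `j` -/
def countLe (z : Fin n → Fin m) (j : Fin m) : ℕ :=
  (Finset.univ.filter (fun u => z u ≤ j)).card

lemma countLe_comp (z : Fin n → Fin m) (σ : Equiv.Perm (Fin n)) (j : Fin m) :
    countLe (z ∘ σ) j = countLe z j := by
  unfold countLe
  apply Finset.card_bij (fun t _ => σ t)
  · intro a ha; simp only [mem_filter, mem_univ, true_and] at ha ⊢; exact ha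
  · intro a _ b _ h; exact σ.injective h
  · intro b hb
    simp only [mem_filter, mem_univ, true_and] at hb ⊢
    exact ⟨σ⁻¹ b, by simpa using hb, by simp⟩

lemma mono_le_iff (z : Fin n → Fin m) (hz : ∀ i j : Fin n, i ≤ j → z i ≤ z j)
    (t : Fin n) (j : Fin m) : z t ≤ j ↔ (t : ℕ) < countLe z j := by
  constructor
  · intro h
    have hsub : Finset.Iic t ⊆ Finset.univ.filter (fun u => z u ≤ j) := by
      intro u hu
      simp only [Finset.mem_Iic] at hu
      simp only [mem_filter, mem_univ, true_and]
      exact le_trans (hz u t hu) h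
    have := Finset.card_le_card hsub
    rw [Fin.card_Iic] at this
    unfold countLe
    omega
  · intro h
    by_contra hc
    push_neg at hc
    have hsub : Finset.univ.filter (fun u => z u ≤ j) ⊆ Finset.Iio t := by
      intro u hu
      simp only [mem_filter, mem_univ, true_and] at hu
      simp only [Finset.mem_Iio]
      by_contra hut
      push_neg at hut
      exact absurd (le_trans (hz t u hut) hu) (not_le.mpr hc)
    have := Finset.card_le_card hsub
    rw [Fin.card_Iio] at this
    unfold countLe at h
    omega

lemma sorted_unique (z z' : Fin n → Fin m)
    (hz : ∀ i j : Fin n, i ≤ j → z i ≤ z j) (hz' : ∀ i j : Fin n, i ≤ j → z' i ≤ z' j)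
    (σ : Equiv.Perm (Fin n)) (h : z' = z ∘ σ) : z' = z := by
  funext t
  have key : ∀ j, countLe z' j = countLe z j := fun j => by rw [h, countLe_comp]
  apply le_antisymm
  · rw [mono_le_iff z' hz' t (z t), key]
    exact (mono_le_iff z hz t (z t)).mp le_rfl
  · rw [mono_le_iff z hz t (z' t), ← key]
    exact (mono_le_iff z' hz' t (z' t)).mp le_rfl


section PairSums

lemma nested_eq_prod {α : Type*} [AddCommMonoid α] (p : Fin n → Fin n → Prop)
    [∀ t u, Decidable (p t u)] (F : Fin n → Fin n → α) :
    ∑ t, ∑ u ∈ Finset.univ.filter (fun u => p t u), F t u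
      = ∑ z ∈ (Finset.univ ×ˢ Finset.univ).filter (fun z : Fin n × Fin n => p z.1 z.2),
          F z.1 z.2 := by
  rw [Finset.sum_filter, Finset.sum_product]
  exact Finset.sum_congr rfl fun t _ => by rw [Finset.sum_filter]

lemma two_mul_pairsum (f : Fin n → ℂ) :
    2 * ∑ t, ∑ u ∈ Finset.univ.filter (fun u => t < u), f t * f u
      = (∑ t, f t) ^ 2 - ∑ t, f t * f t := by
  have expand : (∑ t, f t) ^ 2 = ∑ t, ∑ u, f t * f u := by
    rw [sq, Finset.sum_mul_sum]
  have split : ∀ t : Fin n, (∑ u, f t * f u)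
      = (∑ u ∈ Finset.univ.filter (fun u => t < u), f t * f u)
        + ((∑ u ∈ Finset.univ.filter (fun u => u < t), f t * f u) + f t * f t) := by
    intro t
    rw [← Finset.sum_filter_add_sum_filter_not Finset.univ (fun u => t < u) (fun u => f t * f u)]
    congr 1
    have h1 : Finset.univ.filter (fun u => ¬ t < u) = Finset.Iic t := by
      ext u; simp [not_lt]
    have h2 : Finset.Iio t = Finset.univ.filter (fun u => u < t) := by ext u; simp
    rw [h1, ← Finset.Iio_insert, Finset.sum_insert (by simp), h2]
    ring
  have LP : (∑ t, ∑ u ∈ Finset.univ.filter (fun u => u < t), f t * f u)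
      = ∑ t, ∑ u ∈ Finset.univ.filter (fun u => t < u), f t * f u := by
    rw [nested_eq_prod (fun t u => u < t), nested_eq_prod (fun t u => t < u)]
    refine Finset.sum_nbij' Prod.swap Prod.swap ?_ ?_ ?_ ?_ ?_
    · intro a ha; simp only [Finset.mem_filter, Finset.mem_product, Finset.mem_univ,
        true_and, and_true, Prod.fst_swap, Prod.snd_swap] at ha ⊢
      exact ha
    · intro a ha; simp only [Finset.mem_filter, Finset.mem_product, Finset.mem_univ,
        true_and, and_true, Prod.fst_swap, Prod.snd_swap] at ha ⊢
      exact ha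
    · intro a _; simp
    · intro a _; simp
    · intro a _; simp only [Prod.fst_swap, Prod.snd_swap]; ring
  have total : (∑ t, ∑ u, f t * f u)
      = (∑ t, ∑ u ∈ Finset.univ.filter (fun u => t < u), f t * f u)
        + ((∑ t, ∑ u ∈ Finset.univ.filter (fun u => u < t), f t * f u) + ∑ t, f t * f t) := by
    rw [Finset.sum_congr rfl fun t _ => split t, Finset.sum_add_distrib, Finset.sum_add_distrib]
  rw [expand, total, LP]
  ring

lemma pairsum_comp (f : Fin n → ℂ) (σ : Equiv.Perm (Fin n)) :
    ∑ t, ∑ u ∈ Finset.univ.filter (fun u => t < u), f (σ t) * f (σ u)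
      = ∑ t, ∑ u ∈ Finset.univ.filter (fun u => t < u), f t * f u := by
  have h1 := two_mul_pairsum (fun t => f (σ t))
  have h2 := two_mul_pairsum f
  have e1 : ∑ t, f (σ t) = ∑ t, f t := Equiv.sum_comp σ f
  have e2 : ∑ t, f (σ t) * f (σ t) = ∑ t, f t * f t := Equiv.sum_comp σ (fun t => f t * f t)
  refine mul_left_cancel₀ (two_ne_zero' ℂ) ?_
  rw [h1, h2, e1, e2]

end PairSums

section Agree

lemma agree_iff {t u : Fin n} (htu : t ≠ u) (σ τ : Equiv.Perm (Fin n)) :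
    (∀ r, ¬(r = t ∨ r = u) → τ r = σ r) ↔ τ = σ ∨ τ = σ * Equiv.swap t u := by
  constructor
  · intro h
    have htau : ∀ a : Fin n, (a = t ∨ a = u) → τ a = σ t ∨ τ a = σ u := by
      intro a ha
      by_contra hc
      push_neg at hc
      obtain ⟨h1, h2⟩ := hc
      set r := σ⁻¹ (τ a) with hrdef
      have hσr : σ r = τ a := by simp [hrdef]
      have hrt : r ≠ t := fun hrt => h1 (by rw [← hσr, hrt])
      have hru : r ≠ u := fun hru => h2 (by rw [← hσr, hru])
      have h3 : τ r = σ r := h r (by push_neg; exact ⟨hrt, hru⟩)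
      have h4 : r = a := τ.injective (by rw [h3, hσr])
      rcases ha with rfl | rfl
      · exact hrt h4
      · exact hru h4
    rcases htau t (Or.inl rfl) with h1 | h1
    · left
      have h2 : τ u = σ u := by
        rcases htau u (Or.inr rfl) with h3 | h3
        · exact absurd (τ.injective (h3.trans h1.symm)) htu.symm
        · exact h3
      apply Equiv.ext
      intro r
      by_cases hrt : r = t
      · rw [hrt]; exact h1
      by_cases hru : r = u
      · rw [hru]; exact h2
      exact h r (by push_neg; exact ⟨hrt, hru⟩)
    · right
      have h2 : τ u = σ t := by
        rcases htau u (Or.inr rfl) with h3 | h3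
        · exact h3
        · exact absurd (τ.injective (h1.trans h3.symm)) htu
      apply Equiv.ext
      intro r
      by_cases hrt : r = t
      · subst hrt
        rw [h1]
        simp [Equiv.Perm.mul_apply, Equiv.swap_apply_left]
      by_cases hru : r = u
      · subst hru
        rw [h2]
        simp [Equiv.Perm.mul_apply, Equiv.swap_apply_right]
      rw [h r (by push_neg; exact ⟨hrt, hru⟩)]
      simp [Equiv.Perm.mul_apply, Equiv.swap_apply_of_ne_of_ne hrt hru]
  · rintro (rfl | rfl) r hr
    · rfl
    · push_neg at hr
      simp [Equiv.Perm.mul_apply, Equiv.swap_apply_of_ne_of_ne hr.1 hr.2]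

end Agree

section Core

lemma indicator_prod {t u : Fin n} (htu : t ≠ u) (w : Fin n → Fin m) (i : Fin m) :
    (∏ r, if r = t ∨ r = u then (if w r = i then (1:ℂ) else 0) else 1)
      = if w t = i ∧ w u = i then 1 else 0 := by
  rw [← Finset.prod_filter_mul_prod_filter_not Finset.univ (fun r => r = t ∨ r = u)]
  have hf : Finset.univ.filter (fun r : Fin n => r = t ∨ r = u) = {t, u} := by
    ext r; simp
  have h2 : (∏ r ∈ Finset.univ.filter (fun r : Fin n => ¬(r = t ∨ r = u)),
      (if r = t ∨ r = u then (if w r = i then (1:ℂ) else 0) else 1)) = 1 := by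
    apply Finset.prod_eq_one
    intro r hr
    simp only [Finset.mem_filter] at hr
    rw [if_neg hr.2]
  rw [hf, Finset.prod_pair htu, h2,
    if_pos (Or.inl rfl : t = t ∨ t = u), if_pos (Or.inr rfl : u = t ∨ u = u)]
  by_cases h1 : w t = i <;> by_cases h3 : w u = i <;> simp [h1, h3]

variable {A : Matrix (Fin m) (Fin n) ℂ}

lemma col_delta (hA : Aᴴ * A = 1) (a b : Fin n) :
    ∑ j, A j b * (starRingEnd ℂ) (A j a) = if a = b then 1 else 0 := by
  have h := congrFun (congrFun hA a) b
  rw [Matrix.mul_apply] at h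
  simp only [Matrix.conjTranspose_apply] at h
  rw [Matrix.one_apply] at h
  rw [← h]
  exact Finset.sum_congr rfl fun j _ => by rw [Complex.star_def]; ring

lemma core_sum (hA : Aᴴ * A = 1) {t u : Fin n} (htlt : t < u) (i : Fin m) :
    ∑ w : Fin n → Fin m,
        (if w t = i ∧ w u = i then (1:ℂ) else 0) * (Pw A w * (starRingEnd ℂ) (Pw A w))
      = 2 * ∑ σ : Equiv.Perm (Fin n),
          (Complex.normSq (A i (σ t)) : ℂ) * (Complex.normSq (A i (σ u)) : ℂ) := by
  classical
  have hne : t ≠ u := ne_of_lt htlt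
  have step1 : ∀ w : Fin n → Fin m,
      (if w t = i ∧ w u = i then (1:ℂ) else 0) * (Pw A w * (starRingEnd ℂ) (Pw A w))
      = ∑ σ : Equiv.Perm (Fin n), ∑ τ : Equiv.Perm (Fin n),
          ∏ r, ((if r = t ∨ r = u then (if w r = i then (1:ℂ) else 0) else 1)
                 * (A (w r) (σ r) * (starRingEnd ℂ) (A (w r) (τ r)))) := by
    intro w
    have hP : Pw A w * (starRingEnd ℂ) (Pw A w)
        = ∑ σ : Equiv.Perm (Fin n), ∑ τ : Equiv.Perm (Fin n),
            ∏ r, (A (w r) (σ r) * (starRingEnd ℂ) (A (w r) (τ r))) := by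
      unfold Pw
      rw [map_sum, Finset.sum_mul_sum]
      refine Finset.sum_congr rfl fun σ _ => Finset.sum_congr rfl fun τ _ => ?_
      rw [map_prod, ← Finset.prod_mul_distrib]
    rw [hP, Finset.mul_sum]
    refine Finset.sum_congr rfl fun σ _ => ?_
    rw [Finset.mul_sum]
    refine Finset.sum_congr rfl fun τ _ => ?_
    conv_rhs => rw [Finset.prod_mul_distrib]
    rw [indicator_prod hne]
  calc ∑ w : Fin n → Fin m,
        (if w t = i ∧ w u = i then (1:ℂ) else 0) * (Pw A w * (starRingEnd ℂ) (Pw A w))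
      = ∑ w : Fin n → Fin m, ∑ σ : Equiv.Perm (Fin n), ∑ τ : Equiv.Perm (Fin n),
          ∏ r, ((if r = t ∨ r = u then (if w r = i then (1:ℂ) else 0) else 1)
                 * (A (w r) (σ r) * (starRingEnd ℂ) (A (w r) (τ r)))) :=
        Finset.sum_congr rfl fun w _ => step1 w
    _ = ∑ σ : Equiv.Perm (Fin n), ∑ τ : Equiv.Perm (Fin n), ∑ w : Fin n → Fin m,
          ∏ r, ((if r = t ∨ r = u then (if w r = i then (1:ℂ) else 0) else 1)
                 * (A (w r) (σ r) * (starRingEnd ℂ) (A (w r) (τ r)))) := by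
        rw [Finset.sum_comm]
        exact Finset.sum_congr rfl fun σ _ => Finset.sum_comm
    _ = ∑ σ : Equiv.Perm (Fin n), ∑ τ : Equiv.Perm (Fin n),
          ∏ r, ∑ j, ((if r = t ∨ r = u then (if j = i then (1:ℂ) else 0) else 1)
                 * (A j (σ r) * (starRingEnd ℂ) (A j (τ r)))) := by
        refine Finset.sum_congr rfl fun σ _ => Finset.sum_congr rfl fun τ _ => ?_
        rw [Finset.prod_univ_sum, Fintype.piFinset_univ]
    _ = ∑ σ : Equiv.Perm (Fin n), ∑ τ : Equiv.Perm (Fin n),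
          ∏ r, (if r = t ∨ r = u then A i (σ r) * (starRingEnd ℂ) (A i (τ r))
                else (if τ r = σ r then (1:ℂ) else 0)) := by
        refine Finset.sum_congr rfl fun σ _ => Finset.sum_congr rfl fun τ _ =>
          Finset.prod_congr rfl fun r _ => ?_
        by_cases hr : r = t ∨ r = u
        · simp only [if_pos hr, ite_mul, one_mul, zero_mul]
          rw [Finset.sum_ite_eq' Finset.univ i
            (fun j => A j (σ r) * (starRingEnd ℂ) (A j (τ r)))]
          simp
        · simp only [if_neg hr, one_mul]
          exact col_delta hA (τ r) (σ r)
    _ = ∑ σ : Equiv.Perm (Fin n), ∑ τ : Equiv.Perm (Fin n),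
          ((A i (σ t) * (starRingEnd ℂ) (A i (τ t))) * (A i (σ u) * (starRingEnd ℂ) (A i (τ u)))
            * (if (∀ r, ¬(r = t ∨ r = u) → τ r = σ r) then (1:ℂ) else 0)) := by
        refine Finset.sum_congr rfl fun σ _ => Finset.sum_congr rfl fun τ _ => ?_
        rw [← Finset.prod_filter_mul_prod_filter_not Finset.univ (fun r => r = t ∨ r = u)]
        have hf : Finset.univ.filter (fun r : Fin n => r = t ∨ r = u) = {t, u} := by
          ext r; simp
        rw [hf, Finset.prod_pair hne,
          if_pos (Or.inl rfl : t = t ∨ t = u), if_pos (Or.inr rfl : u = t ∨ u = u)]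
        congr 1
        calc (∏ r ∈ Finset.univ.filter (fun r : Fin n => ¬(r = t ∨ r = u)),
              (if r = t ∨ r = u then A i (σ r) * (starRingEnd ℂ) (A i (τ r))
                else (if τ r = σ r then (1:ℂ) else 0)))
            = ∏ r ∈ Finset.univ.filter (fun r : Fin n => ¬(r = t ∨ r = u)),
                (if τ r = σ r then (1:ℂ) else 0) :=
              Finset.prod_congr rfl fun r hr => by
                rw [if_neg (Finset.mem_filter.mp hr).2]
          _ = if (∀ r, ¬(r = t ∨ r = u) → τ r = σ r) then (1:ℂ) else 0 := by
              rw [Finset.prod_boole]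
              simp only [Finset.mem_filter, Finset.mem_univ, true_and]
    _ = ∑ σ : Equiv.Perm (Fin n),
          2 * ((Complex.normSq (A i (σ t)) : ℂ) * (Complex.normSq (A i (σ u)) : ℂ)) := by
        refine Finset.sum_congr rfl fun σ _ => ?_
        have hstep : ∀ τ : Equiv.Perm (Fin n),
            ((A i (σ t) * (starRingEnd ℂ) (A i (τ t))) * (A i (σ u) * (starRingEnd ℂ) (A i (τ u)))
             * (if (∀ r, ¬(r = t ∨ r = u) → τ r = σ r) then (1:ℂ) else 0))
            = (if (∀ r, ¬(r = t ∨ r = u) → τ r = σ r) then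
                ((A i (σ t) * (starRingEnd ℂ) (A i (τ t)))
                  * (A i (σ u) * (starRingEnd ℂ) (A i (τ u)))) else 0) := by
          intro τ
          rw [mul_ite, mul_one, mul_zero]
        rw [Finset.sum_congr rfl fun τ _ => hstep τ, ← Finset.sum_filter]
        have hfil : Finset.univ.filter
            (fun τ : Equiv.Perm (Fin n) => ∀ r, ¬(r = t ∨ r = u) → τ r = σ r)
            = {σ, σ * Equiv.swap t u} := by
          ext τ
          simp only [Finset.mem_filter, Finset.mem_univ, true_and, Finset.mem_insert,
            Finset.mem_singleton]
          exact agree_iff hne σ τ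
        have hσne : σ ≠ σ * Equiv.swap t u := by
          intro h
          have h2 := congrFun (congrArg (fun (e : Equiv.Perm (Fin n)) => (e : Fin n → Fin n)) h) t
          simp only [Equiv.Perm.coe_mul, Function.comp_apply, Equiv.swap_apply_left] at h2
          exact hne (σ.injective h2)
        rw [hfil, Finset.sum_pair hσne]
        have e1 : (σ * Equiv.swap t u) t = σ u := by
          simp [Equiv.Perm.mul_apply, Equiv.swap_apply_left]
        have e2 : (σ * Equiv.swap t u) u = σ t := by
          simp [Equiv.Perm.mul_apply, Equiv.swap_apply_right]
        rw [e1, e2]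
        have key : ∀ x y : ℂ, (x * (starRingEnd ℂ) x) * (y * (starRingEnd ℂ) y)
            + (x * (starRingEnd ℂ) y) * (y * (starRingEnd ℂ) x)
            = 2 * ((Complex.normSq x : ℂ) * (Complex.normSq y : ℂ)) := by
          intro x y
          rw [← Complex.mul_conj x, ← Complex.mul_conj y]
          ring
        exact key _ _
    _ = 2 * ∑ σ : Equiv.Perm (Fin n),
          (Complex.normSq (A i (σ t)) : ℂ) * (Complex.normSq (A i (σ u)) : ℂ) := by
        rw [Finset.mul_sum]

end Core


lemma complex_identity (A : Matrix (Fin m) (Fin n) ℂ) (hA : Aᴴ * A = 1) :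
    ∑ w : Fin n → Fin m,
        (((∑ i : Fin m, ∑ t : Fin n, ∑ u ∈ Finset.univ.filter (fun u => t < u),
            (if w t = i ∧ w u = i then (1:ℕ) else 0) : ℕ) : ℂ)
          * (Pw A w * (starRingEnd ℂ) (Pw A w)))
      = 2 * (n.factorial : ℂ)
          * ∑ i : Fin m, ∑ k : Fin n, ∑ l ∈ Finset.univ.filter (fun l => k < l),
              (Complex.normSq (A i k) : ℂ) * (Complex.normSq (A i l) : ℂ) := by
  classical
  calc ∑ w : Fin n → Fin m,
        (((∑ i : Fin m, ∑ t : Fin n, ∑ u ∈ Finset.univ.filter (fun u => t < u),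
            (if w t = i ∧ w u = i then (1:ℕ) else 0) : ℕ) : ℂ)
          * (Pw A w * (starRingEnd ℂ) (Pw A w)))
      = ∑ w : Fin n → Fin m,
        ((∑ i : Fin m, ∑ t : Fin n, ∑ u ∈ Finset.univ.filter (fun u => t < u),
            (if w t = i ∧ w u = i then (1:ℂ) else 0))
          * (Pw A w * (starRingEnd ℂ) (Pw A w))) := by
        refine Finset.sum_congr rfl fun w _ => ?_
        congr 1
        push_cast [Nat.cast_ite]
        rfl
    _ = ∑ w : Fin n → Fin m, ∑ i : Fin m, ∑ t : Fin n, ∑ u ∈ Finset.univ.filter (fun u => t < u),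
          ((if w t = i ∧ w u = i then (1:ℂ) else 0) * (Pw A w * (starRingEnd ℂ) (Pw A w))) := by
        refine Finset.sum_congr rfl fun w _ => ?_
        rw [Finset.sum_mul]
        refine Finset.sum_congr rfl fun i _ => ?_
        rw [Finset.sum_mul]
        refine Finset.sum_congr rfl fun t _ => ?_
        rw [Finset.sum_mul]
    _ = ∑ i : Fin m, ∑ t : Fin n, ∑ u ∈ Finset.univ.filter (fun u => t < u),
          ∑ w : Fin n → Fin m,
          ((if w t = i ∧ w u = i then (1:ℂ) else 0) * (Pw A w * (starRingEnd ℂ) (Pw A w))) := by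
        rw [Finset.sum_comm]
        refine Finset.sum_congr rfl fun i _ => ?_
        rw [Finset.sum_comm]
        refine Finset.sum_congr rfl fun t _ => ?_
        rw [Finset.sum_comm]
    _ = ∑ i : Fin m, ∑ t : Fin n, ∑ u ∈ Finset.univ.filter (fun u => t < u),
          2 * ∑ σ : Equiv.Perm (Fin n),
            (Complex.normSq (A i (σ t)) : ℂ) * (Complex.normSq (A i (σ u)) : ℂ) := by
        refine Finset.sum_congr rfl fun i _ => Finset.sum_congr rfl fun t _ =>
          Finset.sum_congr rfl fun u hu => ?_
        exact core_sum hA (Finset.mem_filter.mp hu).2 i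
    _ = ∑ i : Fin m, 2 * ((n.factorial : ℂ)
          * ∑ k : Fin n, ∑ l ∈ Finset.univ.filter (fun l => k < l),
              (Complex.normSq (A i k) : ℂ) * (Complex.normSq (A i l) : ℂ)) := by
        refine Finset.sum_congr rfl fun i _ => ?_
        calc ∑ t : Fin n, ∑ u ∈ Finset.univ.filter (fun u => t < u),
              2 * ∑ σ : Equiv.Perm (Fin n),
                (Complex.normSq (A i (σ t)) : ℂ) * (Complex.normSq (A i (σ u)) : ℂ)
            = 2 * ∑ t : Fin n, ∑ u ∈ Finset.univ.filter (fun u => t < u),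
                ∑ σ : Equiv.Perm (Fin n),
                  (Complex.normSq (A i (σ t)) : ℂ) * (Complex.normSq (A i (σ u)) : ℂ) := by
              rw [Finset.mul_sum]
              exact Finset.sum_congr rfl fun t _ => by rw [Finset.mul_sum]
          _ = 2 * ∑ σ : Equiv.Perm (Fin n), ∑ t : Fin n, ∑ u ∈ Finset.univ.filter (fun u => t < u),
                (Complex.normSq (A i (σ t)) : ℂ) * (Complex.normSq (A i (σ u)) : ℂ) := by
              congr 1
              calc ∑ t : Fin n, ∑ u ∈ Finset.univ.filter (fun u => t < u),
                    ∑ σ : Equiv.Perm (Fin n),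
                      (Complex.normSq (A i (σ t)) : ℂ) * (Complex.normSq (A i (σ u)) : ℂ)
                  = ∑ t : Fin n, ∑ σ : Equiv.Perm (Fin n),
                      ∑ u ∈ Finset.univ.filter (fun u => t < u),
                        (Complex.normSq (A i (σ t)) : ℂ) * (Complex.normSq (A i (σ u)) : ℂ) :=
                    Finset.sum_congr rfl fun t _ => Finset.sum_comm
                _ = _ := Finset.sum_comm
          _ = 2 * ∑ σ : Equiv.Perm (Fin n), ∑ k : Fin n, ∑ l ∈ Finset.univ.filter (fun l => k < l),
                (Complex.normSq (A i k) : ℂ) * (Complex.normSq (A i l) : ℂ) := by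
              congr 1
              exact Finset.sum_congr rfl fun σ _ =>
                pairsum_comp (fun k => (Complex.normSq (A i k) : ℂ)) σ
          _ = 2 * ((n.factorial : ℂ)
                * ∑ k : Fin n, ∑ l ∈ Finset.univ.filter (fun l => k < l),
                    (Complex.normSq (A i k) : ℂ) * (Complex.normSq (A i l) : ℂ)) := by
              rw [Finset.sum_const, Finset.card_univ, Fintype.card_perm, Fintype.card_fin,
                nsmul_eq_mul]
    _ = 2 * (n.factorial : ℂ)
          * ∑ i : Fin m, ∑ k : Fin n, ∑ l ∈ Finset.univ.filter (fun l => k < l),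
              (Complex.normSq (A i k) : ℂ) * (Complex.normSq (A i l) : ℂ) := by
        simp only [Finset.mul_sum, mul_assoc]

end CollisionAux

set_option maxHeartbeats 1000000 in
/-- Collision probability bound: the probability under the Boson Sampling
distribution `q(z) = (1/μ(z))|Per A_z|²` (on non-decreasing `z ∈ [m]^n`) that
some value appears at least twice is at most
`2 ∑_i ∑_{k<ℓ} |a_{i,k}|² |a_{i,ℓ}|²`. -/
theorem collision_probability_bound {m n : ℕ} (A : Matrix (Fin m) (Fin n) ℂ)
    (hA : Aᴴ * A = 1) :
    ∑ z ∈ Finset.univ.filter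
        (fun z : Fin n → Fin m =>
          (∀ i j : Fin n, i ≤ j → z i ≤ z j) ∧
          ∃ v : Fin m, 2 ≤ (Finset.univ.filter (fun t => z t = v)).card),
      (1 / (mu z : ℝ)) * ‖perm (Matrix.of fun i j => A (z i) j)‖ ^ 2
    ≤ 2 * ∑ i : Fin m, ∑ k : Fin n, ∑ l ∈ Finset.univ.filter (fun l => k < l),
        ‖A i k‖ ^ 2 * ‖A i l‖ ^ 2 := by
  classical
  simp only [CollisionAux.Pw_eq_perm]
  have horbconst : ∀ z : Fin n → Fin m, ∀ w ∈ CollisionAux.orbit z,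
      ‖CollisionAux.Pw A w‖ ^ 2 = ‖CollisionAux.Pw A z‖ ^ 2 := by
    intro z w hw
    obtain ⟨σ, _, rfl⟩ := Finset.mem_image.mp hw
    rw [CollisionAux.Pw_comp]
  set S : Finset (Fin n → Fin m) := Finset.univ.filter
      (fun z : Fin n → Fin m =>
        (∀ i j : Fin n, i ≤ j → z i ≤ z j) ∧
        ∃ v : Fin m, 2 ≤ (Finset.univ.filter (fun t => z t = v)).card) with hS
  set C : Finset (Fin n → Fin m) := Finset.univ.filter
      (fun w : Fin n → Fin m =>
        ∃ v : Fin m, 2 ≤ (Finset.univ.filter (fun t => w t = v)).card) with hC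
  have horbsub : ∀ z ∈ S, CollisionAux.orbit z ⊆ C := by
    intro z hz w hw
    obtain ⟨σ, _, rfl⟩ := Finset.mem_image.mp hw
    obtain ⟨v, hv⟩ := (Finset.mem_filter.mp hz).2.2
    refine Finset.mem_filter.mpr ⟨Finset.mem_univ _, ⟨v, ?_⟩⟩
    rw [CollisionAux.fiber_card_comp]
    exact hv
  have hdisj : (↑S : Set (Fin n → Fin m)).PairwiseDisjoint CollisionAux.orbit := by
    intro z hz z' hz' hne
    have hzm := (Finset.mem_filter.mp (Finset.mem_coe.mp hz)).2.1
    have hzm' := (Finset.mem_filter.mp (Finset.mem_coe.mp hz')).2.1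
    refine Finset.disjoint_left.mpr ?_
    intro w hw hw'
    obtain ⟨σ, _, rfl⟩ := Finset.mem_image.mp hw
    obtain ⟨σ', _, he⟩ := Finset.mem_image.mp hw'
    apply hne
    have hz'z : z' = z ∘ ⇑(σ * σ'⁻¹) := by
      funext r
      have h1 := congrFun he (σ'⁻¹ r)
      simp only [Function.comp_apply, Equiv.Perm.coe_mul] at h1 ⊢
      rw [← h1]
      simp
    exact (CollisionAux.sorted_unique z z' hzm hzm' (σ * σ'⁻¹) hz'z).symm
  have hA1 : ∀ z ∈ S, (1 / (mu z : ℝ)) * ‖CollisionAux.Pw A z‖ ^ 2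
      ≤ (1 / (n.factorial : ℝ))
        * ∑ w ∈ CollisionAux.orbit z, ‖CollisionAux.Pw A w‖ ^ 2 := by
    intro z _
    have horb : ∑ w ∈ CollisionAux.orbit z, ‖CollisionAux.Pw A w‖ ^ 2
        = ((CollisionAux.orbit z).card : ℝ) * ‖CollisionAux.Pw A z‖ ^ 2 := by
      rw [Finset.sum_eq_card_nsmul (horbconst z), nsmul_eq_mul]
    have hmupos : (0:ℝ) < (mu z : ℝ) := by
      have h0 : 0 < mu z := by
        unfold mu
        exact Finset.prod_pos fun j _ => Nat.factorial_pos _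
      exact_mod_cast h0
    have hfpos : (0:ℝ) < (n.factorial : ℝ) := by exact_mod_cast n.factorial_pos
    have hle : (n.factorial : ℝ) ≤ ((CollisionAux.orbit z).card : ℝ) * (mu z : ℝ) := by
      exact_mod_cast CollisionAux.factorial_le_orbit_card_mul_mu z
    have h1 : (1 / (mu z : ℝ)) ≤ ((CollisionAux.orbit z).card : ℝ) / (n.factorial : ℝ) := by
      rw [div_le_div_iff₀ hmupos hfpos, one_mul]
      exact hle
    rw [horb]
    calc (1 / (mu z : ℝ)) * ‖CollisionAux.Pw A z‖ ^ 2
        ≤ (((CollisionAux.orbit z).card : ℝ) / (n.factorial : ℝ))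
            * ‖CollisionAux.Pw A z‖ ^ 2 :=
          mul_le_mul_of_nonneg_right h1 (sq_nonneg _)
      _ = (1 / (n.factorial : ℝ))
            * (((CollisionAux.orbit z).card : ℝ) * ‖CollisionAux.Pw A z‖ ^ 2) := by
          ring
  have main1 : (∑ z ∈ S, (1 / (mu z : ℝ)) * ‖CollisionAux.Pw A z‖ ^ 2)
      ≤ (1 / (n.factorial : ℝ)) * ∑ w ∈ C, ‖CollisionAux.Pw A w‖ ^ 2 := by
    calc ∑ z ∈ S, (1 / (mu z : ℝ)) * ‖CollisionAux.Pw A z‖ ^ 2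
        ≤ ∑ z ∈ S, (1 / (n.factorial : ℝ))
            * ∑ w ∈ CollisionAux.orbit z, ‖CollisionAux.Pw A w‖ ^ 2 :=
          Finset.sum_le_sum hA1
      _ = (1 / (n.factorial : ℝ))
            * ∑ z ∈ S, ∑ w ∈ CollisionAux.orbit z, ‖CollisionAux.Pw A w‖ ^ 2 := by
          rw [Finset.mul_sum]
      _ = (1 / (n.factorial : ℝ))
            * ∑ w ∈ S.biUnion CollisionAux.orbit, ‖CollisionAux.Pw A w‖ ^ 2 := by
          rw [Finset.sum_biUnion hdisj]
      _ ≤ (1 / (n.factorial : ℝ)) * ∑ w ∈ C, ‖CollisionAux.Pw A w‖ ^ 2 := by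
          refine mul_le_mul_of_nonneg_left ?_ (by positivity)
          refine Finset.sum_le_sum_of_subset_of_nonneg ?_ (fun w _ _ => sq_nonneg _)
          intro w hw
          obtain ⟨z, hz, hwz⟩ := Finset.mem_biUnion.mp hw
          exact horbsub z hz hwz
  have hNB : ∀ w ∈ C, 1 ≤ ∑ i : Fin m, ∑ t : Fin n, ∑ u ∈ Finset.univ.filter (fun u => t < u),
      (if w t = i ∧ w u = i then (1:ℕ) else 0) := by
    intro w hw
    obtain ⟨v, hv⟩ := (Finset.mem_filter.mp hw).2
    obtain ⟨a, ha, b, hb, hab⟩ := Finset.one_lt_card.mp hv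
    have hwa : w a = v := (Finset.mem_filter.mp ha).2
    have hwb : w b = v := (Finset.mem_filter.mp hb).2
    have key : ∀ t u : Fin n, t < u → w t = v → w u = v →
        1 ≤ ∑ i : Fin m, ∑ t' : Fin n, ∑ u' ∈ Finset.univ.filter (fun u' => t' < u'),
          (if w t' = i ∧ w u' = i then (1:ℕ) else 0) := by
      intro t u htu h1 h2
      have c1 : (1:ℕ) ≤ ∑ u' ∈ Finset.univ.filter (fun u' => t < u'),
          (if w t = v ∧ w u' = v then (1:ℕ) else 0) := by
        have hmem : u ∈ Finset.univ.filter (fun u' => t < u') :=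
          Finset.mem_filter.mpr ⟨Finset.mem_univ u, htu⟩
        have := Finset.single_le_sum
          (f := fun u' => if w t = v ∧ w u' = v then (1:ℕ) else 0)
          (fun _ _ => Nat.zero_le _) hmem
        simpa [h1, h2] using this
      have c2 : (1:ℕ) ≤ ∑ t' : Fin n, ∑ u' ∈ Finset.univ.filter (fun u' => t' < u'),
          (if w t' = v ∧ w u' = v then (1:ℕ) else 0) := by
        refine le_trans c1 (Finset.single_le_sum
          (f := fun t' => ∑ u' ∈ Finset.univ.filter (fun u' => t' < u'),
            (if w t' = v ∧ w u' = v then (1:ℕ) else 0))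
          (fun _ _ => Nat.zero_le _) (Finset.mem_univ t))
      refine le_trans c2 (Finset.single_le_sum
        (f := fun i => ∑ t' : Fin n, ∑ u' ∈ Finset.univ.filter (fun u' => t' < u'),
          (if w t' = i ∧ w u' = i then (1:ℕ) else 0))
        (fun _ _ => Nat.zero_le _) (Finset.mem_univ v))
    rcases hab.lt_or_gt with h | h
    · exact key a b h hwa hwb
    · exact key b a h hwb hwa
  have main2 : ∑ w ∈ C, ‖CollisionAux.Pw A w‖ ^ 2
      ≤ ∑ w : Fin n → Fin m,
          ((∑ i : Fin m, ∑ t : Fin n, ∑ u ∈ Finset.univ.filter (fun u => t < u),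
            (if w t = i ∧ w u = i then (1:ℕ) else 0) : ℕ) : ℝ)
          * ‖CollisionAux.Pw A w‖ ^ 2 := by
    calc ∑ w ∈ C, ‖CollisionAux.Pw A w‖ ^ 2
        ≤ ∑ w ∈ C,
            ((∑ i : Fin m, ∑ t : Fin n, ∑ u ∈ Finset.univ.filter (fun u => t < u),
              (if w t = i ∧ w u = i then (1:ℕ) else 0) : ℕ) : ℝ)
            * ‖CollisionAux.Pw A w‖ ^ 2 := by
          refine Finset.sum_le_sum fun w hw => ?_
          have h1 : (1:ℝ) ≤ ((∑ i : Fin m, ∑ t : Fin n, ∑ u ∈ Finset.univ.filter (fun u => t < u),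
              (if w t = i ∧ w u = i then (1:ℕ) else 0) : ℕ) : ℝ) := by
            exact_mod_cast hNB w hw
          calc ‖CollisionAux.Pw A w‖ ^ 2
              = 1 * ‖CollisionAux.Pw A w‖ ^ 2 := (one_mul _).symm
            _ ≤ _ := mul_le_mul_of_nonneg_right h1 (sq_nonneg _)
      _ ≤ _ := Finset.sum_le_sum_of_subset_of_nonneg (Finset.subset_univ C)
          (fun w _ _ => mul_nonneg (Nat.cast_nonneg _) (sq_nonneg _))
  have main3 : ∑ w : Fin n → Fin m,
      ((∑ i : Fin m, ∑ t : Fin n, ∑ u ∈ Finset.univ.filter (fun u => t < u),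
        (if w t = i ∧ w u = i then (1:ℕ) else 0) : ℕ) : ℝ)
      * ‖CollisionAux.Pw A w‖ ^ 2
      = 2 * (n.factorial : ℝ)
        * ∑ i : Fin m, ∑ k : Fin n, ∑ l ∈ Finset.univ.filter (fun l => k < l),
            ‖A i k‖ ^ 2 * ‖A i l‖ ^ 2 := by
    have hid := CollisionAux.complex_identity A hA
    simp only [Complex.mul_conj] at hid
    apply Complex.ofReal_injective
    rw [Complex.ofReal_sum]
    calc ∑ w : Fin n → Fin m,
          ((((∑ i : Fin m, ∑ t : Fin n, ∑ u ∈ Finset.univ.filter (fun u => t < u),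
            (if w t = i ∧ w u = i then (1:ℕ) else 0) : ℕ) : ℝ)
            * ‖CollisionAux.Pw A w‖ ^ 2 : ℝ) : ℂ)
        = ∑ w : Fin n → Fin m,
            (((∑ i : Fin m, ∑ t : Fin n, ∑ u ∈ Finset.univ.filter (fun u => t < u),
              (if w t = i ∧ w u = i then (1:ℕ) else 0) : ℕ) : ℂ)
            * (Complex.normSq (CollisionAux.Pw A w) : ℂ)) := by
          refine Finset.sum_congr rfl fun w _ => ?_
          rw [Complex.ofReal_mul, Complex.ofReal_natCast]
          exact congrArg _ (congrArg Complex.ofReal (Complex.sq_norm _))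
      _ = 2 * (n.factorial : ℂ)
            * ∑ i : Fin m, ∑ k : Fin n, ∑ l ∈ Finset.univ.filter (fun l => k < l),
                (Complex.normSq (A i k) : ℂ) * (Complex.normSq (A i l) : ℂ) := hid
      _ = (((2 * (n.factorial : ℝ)
            * ∑ i : Fin m, ∑ k : Fin n, ∑ l ∈ Finset.univ.filter (fun l => k < l),
                ‖A i k‖ ^ 2 * ‖A i l‖ ^ 2 : ℝ)) : ℂ) := by
          rw [Complex.ofReal_mul, Complex.ofReal_mul, Complex.ofReal_sum]
          simp only [Complex.ofReal_sum, Complex.ofReal_mul, Complex.ofReal_pow]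
          push_cast
          refine congrArg₂ _ rfl ?_
          refine Finset.sum_congr rfl fun i _ => Finset.sum_congr rfl fun k _ =>
            Finset.sum_congr rfl fun l _ => ?_
          rw [← Complex.sq_norm, ← Complex.sq_norm]
          push_cast
          rfl
  have hfne : (n.factorial : ℝ) ≠ 0 := by
    have := n.factorial_pos
    positivity
  calc ∑ z ∈ S, (1 / (mu z : ℝ)) * ‖CollisionAux.Pw A z‖ ^ 2
      ≤ (1 / (n.factorial : ℝ)) * ∑ w ∈ C, ‖CollisionAux.Pw A w‖ ^ 2 := main1
    _ ≤ (1 / (n.factorial : ℝ)) * ∑ w : Fin n → Fin m,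
          ((∑ i : Fin m, ∑ t : Fin n, ∑ u ∈ Finset.univ.filter (fun u => t < u),
            (if w t = i ∧ w u = i then (1:ℕ) else 0) : ℕ) : ℝ)
          * ‖CollisionAux.Pw A w‖ ^ 2 :=
        mul_le_mul_of_nonneg_left main2 (by positivity)
    _ = (1 / (n.factorial : ℝ)) * (2 * (n.factorial : ℝ)
          * ∑ i : Fin m, ∑ k : Fin n, ∑ l ∈ Finset.univ.filter (fun l => k < l),
              ‖A i k‖ ^ 2 * ‖A i l‖ ^ 2) := by rw [main3]
    _ = 2 * ∑ i : Fin m, ∑ k : Fin n, ∑ l ∈ Finset.univ.filter (fun l => k < l),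
              ‖A i k‖ ^ 2 * ‖A i l‖ ^ 2 := by
        field_simp
end
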